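/- arXiv:1709.07268 — 5 statements merged into one kernel-verified Lean document; each statement's English description precedes it below -/
import Mathlib

section
/- For density matrices ρ₁,…,ρ_N on a finite-dimensional Hilbert space and a probability distribution (p₁,…,p_N), the von Neumann entropy satisfies H(∑ᵢ pᵢ ρᵢ) ≤ ∑ᵢ pᵢ H(ρᵢ) + log N. -/
noncomputable section
open scoped BigOperators ComplexOrder

variable {n : Type*} [Fintype n] [DecidableEq n]

/-- A density matrix: positive semidefinite with trace one. -/
def IsDensity (ρ : Matrix n n ℂ) : Prop := ρ.PosSemidef ∧ ρ.trace = 1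

/-- Apply a real function to a Hermitian matrix via the functional calculus
(junk value `0` if the matrix is not Hermitian). -/
noncomputable def matFun (A : Matrix n n ℂ) (f : ℝ → ℝ) : Matrix n n ℂ :=
  if h : A.IsHermitian then h.cfc f else 0

/-- Von Neumann entropy `H(ρ) = -tr[ρ log ρ]`. -/
noncomputable def vN (ρ : Matrix n n ℂ) : ℝ := (-(ρ * matFun ρ Real.log).trace).re

/-! ### Auxiliary lemmas -/

lemma negMulLog_jensen {ι : Type*} [Fintype ι] (w x : ι → ℝ) (hw : ∀ i, 0 ≤ w i)
    (hw1 : ∑ i, w i ≤ 1) (hx : ∀ i, 0 ≤ x i) :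
    ∑ i, w i * Real.negMulLog (x i) ≤ Real.negMulLog (∑ i, w i * x i) := by
  have key := Real.concaveOn_negMulLog.le_map_sum (t := (Finset.univ : Finset (Option ι)))
    (w := fun o => o.elim (1 - ∑ i, w i) w) (p := fun o => o.elim 0 x) ?_ ?_ ?_
  · simpa [Fintype.sum_option, smul_eq_mul] using key
  · rintro (_|i) _
    · simpa using hw1
    · exact hw i
  · simp [Fintype.sum_option]
  · rintro (_|i) _
    · exact Set.self_mem_Ici
    · exact hx i

lemma crux {κ m : Type*} [Fintype κ] [Fintype m] [DecidableEq κ]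
    (C : Matrix κ m ℂ) (μ : κ → ℝ)
    (h : C * C.conjTranspose = Matrix.diagonal (fun k => (μ k : ℂ))) :
    ∑ k, Real.negMulLog (μ k) ≤ ∑ j, Real.negMulLog (∑ k, ‖C k j‖ ^ 2) := by
  classical
  have hdiag : ∀ k l, ∑ j, C k j * (starRingEnd ℂ) (C l j)
      = if k = l then (μ k : ℂ) else 0 := by
    intro k l
    have := congrFun (congrFun h k) l
    simpa [Matrix.mul_apply, Matrix.conjTranspose_apply, Matrix.diagonal_apply] using this
  have hμ : ∀ k, μ k = ∑ j, ‖C k j‖ ^ 2 := by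
    intro k
    have h2 : ∑ j, C k j * (starRingEnd ℂ) (C k j) = (μ k : ℂ) := by simpa using hdiag k k
    have h3 : ((μ k : ℝ) : ℂ) = ((∑ j, ‖C k j‖ ^ 2 : ℝ) : ℂ) := by
      rw [← h2]
      push_cast
      exact Finset.sum_congr rfl fun j _ => (Complex.mul_conj' _)
    exact_mod_cast h3
  have hμ0 : ∀ k, 0 ≤ μ k := fun k => (hμ k) ▸ Finset.sum_nonneg fun j _ => sq_nonneg _
  have hC0 : ∀ k, μ k = 0 → ∀ j, C k j = 0 := by
    intro k hk j
    have : ∑ j, ‖C k j‖ ^ 2 = 0 := (hμ k).symm.trans hk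
    have := (Finset.sum_eq_zero_iff_of_nonneg (fun j _ => sq_nonneg ‖C k j‖)).mp this j
      (Finset.mem_univ j)
    simpa [pow_eq_zero_iff] using this
  set U : Matrix κ m ℂ := fun k j => C k j / (Real.sqrt (μ k) : ℂ) with hU
  have hUC : ∀ k j, ‖U k j‖ ^ 2 = ‖C k j‖ ^ 2 / μ k := by
    intro k j
    simp only [hU, norm_div, div_pow, Complex.norm_real, Real.norm_eq_abs,
      abs_of_nonneg (Real.sqrt_nonneg _), Real.sq_sqrt (hμ0 k)]
  have hUU : U * U.conjTranspose
      = Matrix.diagonal (fun k => if μ k = 0 then (0 : ℂ) else 1) := by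
    ext k l
    simp only [Matrix.mul_apply, Matrix.conjTranspose_apply, Matrix.diagonal_apply]
    simp only [hU]
    have : ∀ j, C k j / (Real.sqrt (μ k) : ℂ) * star (C l j / (Real.sqrt (μ l) : ℂ))
        = (C k j * (starRingEnd ℂ) (C l j)) / ((Real.sqrt (μ k) : ℂ) * (Real.sqrt (μ l) : ℂ)) := by
      intro j
      simp only [star_div₀, div_mul_div_comm, Complex.star_def, Complex.conj_ofReal]
    rw [Finset.sum_congr rfl fun j _ => this j, ← Finset.sum_div, hdiag k l]
    rcases eq_or_ne k l with rfl | hkl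
    · simp only [if_pos rfl]
      rcases eq_or_ne (μ k) 0 with h0 | h0
      · simp [h0]
      · have hs : ((Real.sqrt (μ k) : ℝ) : ℂ) * ((Real.sqrt (μ k) : ℝ) : ℂ) = (μ k : ℂ) := by
          rw [← Complex.ofReal_mul, Real.mul_self_sqrt (hμ0 k)]
        rw [hs]
        simp [h0, div_self (Complex.ofReal_ne_zero.mpr h0)]
    · simp [hkl]
  have hT : U.conjTranspose * U * (U.conjTranspose * U) = U.conjTranspose * U := by
    have hDU : (Matrix.diagonal (fun k => if μ k = 0 then (0 : ℂ) else 1)) * U = U := by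
      ext k j
      rcases eq_or_ne (μ k) 0 with h0 | h0
      · rw [Matrix.diagonal_mul]; simp [h0, hU, hC0 k h0 j]
      · simp [Matrix.diagonal_mul, h0]
    calc U.conjTranspose * U * (U.conjTranspose * U)
        = U.conjTranspose * (U * U.conjTranspose * U) := by
          simp only [Matrix.mul_assoc]
      _ = U.conjTranspose * U := by rw [hUU, hDU]
  have hcolU : ∀ j, ∑ k, ‖U k j‖ ^ 2 ≤ 1 := by
    intro j
    set T := U.conjTranspose * U with hTdef
    have hTjj : T j j = ((∑ k, ‖U k j‖ ^ 2 : ℝ) : ℂ) := by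
      simp only [hTdef, Matrix.mul_apply, Matrix.conjTranspose_apply]
      push_cast
      refine Finset.sum_congr rfl fun k _ => ?_
      rw [RCLike.star_def, mul_comm, Complex.mul_conj']
    have hTherm : ∀ a b, T b a = (starRingEnd ℂ) (T a b) := by
      intro a b
      simp only [hTdef, Matrix.mul_apply, Matrix.conjTranspose_apply, map_sum, map_mul,
        RCLike.star_def, Complex.conj_conj]
      exact Finset.sum_congr rfl fun i _ => mul_comm _ _
    have hT2 : T j j = ∑ l, T j l * (starRingEnd ℂ) (T j l) := by
      have e := congrFun (congrFun hT j) j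
      rw [Matrix.mul_apply] at e
      rw [← e]
      refine Finset.sum_congr rfl fun l _ => ?_
      congr 1
      exact hTherm j l
    set t := ∑ k, ‖U k j‖ ^ 2 with ht
    have ht0 : 0 ≤ t := Finset.sum_nonneg fun k _ => sq_nonneg _
    have htt : (t : ℂ) = ((∑ l, ‖T j l‖ ^ 2 : ℝ) : ℂ) := by
      rw [← hTjj, hT2]
      push_cast
      exact Finset.sum_congr rfl fun l _ => (Complex.mul_conj' _)
    have htr : t = ∑ l, ‖T j l‖ ^ 2 := by exact_mod_cast htt
    have hsq : t ^ 2 ≤ t := by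
      calc t ^ 2 = ‖T j j‖ ^ 2 := by
            rw [hTjj]; simp [Complex.norm_real, abs_of_nonneg ht0]
        _ ≤ ∑ l, ‖T j l‖ ^ 2 :=
          Finset.single_le_sum (f := fun l => ‖T j l‖ ^ 2) (fun l _ => sq_nonneg _)
            (Finset.mem_univ j)
        _ = t := htr.symm
    nlinarith [hsq, ht0]
  have hq : ∀ j, ∑ k, ‖C k j‖ ^ 2 = ∑ k, ‖U k j‖ ^ 2 * μ k := by
    intro j
    refine Finset.sum_congr rfl fun k _ => ?_
    rcases eq_or_ne (μ k) 0 with h0 | h0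
    · simp [hC0 k h0 j, h0]
    · rw [hUC k j, div_mul_cancel₀ _ h0]
  calc ∑ k, Real.negMulLog (μ k)
      = ∑ k, (∑ j, ‖U k j‖ ^ 2) * Real.negMulLog (μ k) := by
        refine Finset.sum_congr rfl fun k _ => ?_
        rcases eq_or_ne (μ k) 0 with h0 | h0
        · simp [h0]
        · have : ∑ j, ‖U k j‖ ^ 2 = 1 := by
            have h4 : ∑ j, ‖U k j‖ ^ 2 = (∑ j, ‖C k j‖ ^ 2) / μ k := by
              rw [Finset.sum_congr rfl fun j _ => hUC k j, Finset.sum_div]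
            rw [h4, ← hμ k, div_self h0]
          rw [this, one_mul]
    _ = ∑ j, ∑ k, ‖U k j‖ ^ 2 * Real.negMulLog (μ k) := by
        rw [Finset.sum_comm]
        exact Finset.sum_congr rfl fun k _ => by rw [Finset.sum_mul]
    _ ≤ ∑ j, Real.negMulLog (∑ k, ‖U k j‖ ^ 2 * μ k) := by
        refine Finset.sum_le_sum fun j _ => ?_
        exact negMulLog_jensen _ _ (fun k => sq_nonneg _) (hcolU j) hμ0
    _ = ∑ j, Real.negMulLog (∑ k, ‖C k j‖ ^ 2) := by
        refine Finset.sum_congr rfl fun j _ => by rw [hq j]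

lemma rclike_ofReal_eq (x : ℝ) : (RCLike.ofReal x : ℂ) = (x : ℂ) := rfl

lemma conj_mul_conj {m : Type*} [Fintype m] [DecidableEq m] (U D1 D2 : Matrix m m ℂ)
    (hU1 : star U * U = 1) :
    (U * D1 * star U) * (U * D2 * star U) = U * (D1 * (D2 * star U)) := by
  simp only [Matrix.mul_assoc]
  rw [← Matrix.mul_assoc (star U) U, hU1, Matrix.one_mul]

lemma trace_eq_sum_eigen {m : Type*} [Fintype m] [DecidableEq m] {A : Matrix m m ℂ}
    (hA : A.IsHermitian) : A.trace = ∑ k, ((hA.eigenvalues k : ℝ) : ℂ) := by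
  have hU1 : star (hA.eigenvectorUnitary : Matrix m m ℂ) * (hA.eigenvectorUnitary : Matrix m m ℂ)
      = 1 := Unitary.coe_star_mul_self _
  conv_lhs => rw [hA.spectral_theorem, Unitary.conjStarAlgAut_apply]
  rw [Matrix.trace_mul_cycle, hU1, Matrix.one_mul, Matrix.trace_diagonal]
  rfl

lemma vN_eq_sum {m : Type*} [Fintype m] [DecidableEq m] {A : Matrix m m ℂ}
    (hA : A.IsHermitian) :
    vN A = ∑ k, Real.negMulLog (hA.eigenvalues k) := by
  rw [vN, matFun, dif_pos hA]
  have hU1 : star (hA.eigenvectorUnitary : Matrix m m ℂ) * (hA.eigenvectorUnitary : Matrix m m ℂ)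
      = 1 := Unitary.coe_star_mul_self _
  have h1 : A * hA.cfc Real.log
      = (hA.eigenvectorUnitary : Matrix m m ℂ) *
        (Matrix.diagonal (RCLike.ofReal ∘ hA.eigenvalues) *
          (Matrix.diagonal (RCLike.ofReal ∘ Real.log ∘ hA.eigenvalues) *
            star (hA.eigenvectorUnitary : Matrix m m ℂ))) := by
    have h0 := congrArg (fun X : Matrix m m ℂ => X *
      ((hA.eigenvectorUnitary : Matrix m m ℂ) *
        Matrix.diagonal (RCLike.ofReal ∘ Real.log ∘ hA.eigenvalues) *
        star (hA.eigenvectorUnitary : Matrix m m ℂ))) hA.spectral_theorem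
    simp only [Unitary.conjStarAlgAut_apply] at h0
    exact h0.trans (conj_mul_conj _ _ _ hU1)
  rw [h1, ← Matrix.mul_assoc, ← Matrix.mul_assoc, Matrix.trace_mul_cycle, ← Matrix.mul_assoc,
    hU1, Matrix.one_mul, Matrix.diagonal_mul_diagonal, Matrix.trace_diagonal]
  have h2 : ∑ i, (RCLike.ofReal ∘ hA.eigenvalues) i *
      (RCLike.ofReal ∘ Real.log ∘ hA.eigenvalues) i
      = ((∑ i, hA.eigenvalues i * Real.log (hA.eigenvalues i) : ℝ) : ℂ) := by
    push_cast
    rfl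
  rw [h2, ← Complex.ofReal_neg, Complex.ofReal_re]
  simp [Real.negMulLog_eq_neg, Finset.sum_neg_distrib]

lemma sum_negMulLog_le_log_card {N : ℕ} (hN : 0 < N) (p : Fin N → ℝ) (hp : ∀ i, 0 ≤ p i)
    (hp1 : ∑ i, p i = 1) : ∑ i, Real.negMulLog (p i) ≤ Real.log N := by
  have key : ∀ i, Real.negMulLog (p i) ≤ 1 / N - p i + p i * Real.log N := by
    intro i
    rcases eq_or_lt_of_le (hp i) with h0 | h0
    · rw [← h0]
      simp only [Real.negMulLog_zero, sub_zero, zero_mul, add_zero, mul_zero]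
      positivity
    · have hNp : 0 < (N : ℝ) * p i := by positivity
      have hlog := Real.log_le_sub_one_of_pos (show (0:ℝ) < 1 / ((N:ℝ) * p i) by positivity)
      rw [one_div, Real.log_inv, Real.log_mul (by positivity) (ne_of_gt h0)] at hlog
      have h2 := mul_le_mul_of_nonneg_left hlog (le_of_lt h0)
      have hfield : p i * (((N:ℝ) * p i)⁻¹ - 1) = 1 / N - p i := by
        field_simp
      rw [Real.negMulLog]
      nlinarith [h2]
  calc ∑ i, Real.negMulLog (p i) ≤ ∑ i, (1 / N - p i + p i * Real.log N) :=
        Finset.sum_le_sum fun i _ => key i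
    _ = Real.log N := by
        rw [Finset.sum_add_distrib, Finset.sum_sub_distrib, ← Finset.sum_mul, hp1,
          Finset.sum_const, one_mul]
        simp only [Finset.card_univ, Fintype.card_fin, nsmul_eq_mul]
        rw [mul_one_div, div_self (by positivity)]
        ring

lemma conjTranspose_mul_self_diag {k m : Type*} [Fintype k] (X : Matrix k m ℂ) (j : m) :
    (X.conjTranspose * X) j j = ((∑ i, ‖X i j‖ ^ 2 : ℝ) : ℂ) := by
  rw [Matrix.mul_apply]
  push_cast
  refine Finset.sum_congr rfl fun i _ => ?_
  rw [Matrix.conjTranspose_apply, RCLike.star_def, mul_comm, Complex.mul_conj']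

theorem entropy_mixture_le_avg_add_log_card
    {d N : ℕ} (ρ : Fin N → Matrix (Fin d) (Fin d) ℂ) (p : Fin N → ℝ)
    (hρ : ∀ i, IsDensity (ρ i)) (hp : ∀ i, 0 ≤ p i) (hp1 : ∑ i, p i = 1) :
    vN (∑ i, (p i : ℂ) • ρ i) ≤ ∑ i, p i * vN (ρ i) + Real.log N := by
  classical
  rcases Nat.eq_zero_or_pos N with rfl | hN
  · simp at hp1
  have hherm : ∀ i, (ρ i).IsHermitian := fun i => (hρ i).1.1
  have heig0 : ∀ i j, 0 ≤ (hherm i).eigenvalues j := fun i j => (hρ i).1.eigenvalues_nonneg j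
  have heigsum : ∀ i, ∑ j, (hherm i).eigenvalues j = 1 := by
    intro i
    have h := (hρ i).2
    rw [trace_eq_sum_eigen (hherm i)] at h
    exact_mod_cast h
  set ρbar : Matrix (Fin d) (Fin d) ℂ := ∑ i, (p i : ℂ) • ρ i with hρbar
  have hbar : ρbar.IsHermitian := by
    rw [hρbar, Matrix.IsHermitian, Matrix.conjTranspose_sum]
    refine Finset.sum_congr rfl fun i _ => ?_
    rw [Matrix.conjTranspose_smul, hherm i]
    congr 1
    rw [Complex.star_def, Complex.conj_ofReal]
  set Ui : Fin N → Matrix (Fin d) (Fin d) ℂ :=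
    fun i => ((hherm i).eigenvectorUnitary : Matrix (Fin d) (Fin d) ℂ) with hUi
  set M : Matrix (Fin d) (Fin N × Fin d) ℂ :=
    fun k m => (Real.sqrt (p m.1 * (hherm m.1).eigenvalues m.2) : ℂ) * Ui m.1 k m.2 with hM
  have hρentry : ∀ i k l, (ρ i) k l
      = ∑ j, ((hherm i).eigenvalues j : ℂ) * Ui i k j * (starRingEnd ℂ) (Ui i l j) := by
    intro i k l
    have h0 := congrFun (congrFun ((hherm i).spectral_theorem) k) l
    rw [h0, Unitary.conjStarAlgAut_apply, Matrix.mul_apply]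
    refine Finset.sum_congr rfl fun j _ => ?_
    rw [Matrix.mul_diagonal, Matrix.star_apply]
    simp only [Function.comp_apply, RCLike.star_def, rclike_ofReal_eq, hUi]
    ring
  have hMM : M * M.conjTranspose = ρbar := by
    ext k l
    rw [Matrix.mul_apply, hρbar, Matrix.sum_apply, Fintype.sum_prod_type]
    refine Finset.sum_congr rfl fun i _ => ?_
    rw [Matrix.smul_apply, smul_eq_mul, hρentry i k l, Finset.mul_sum]
    refine Finset.sum_congr rfl fun j _ => ?_
    rw [Matrix.conjTranspose_apply]
    have hnn : 0 ≤ p i * (hherm i).eigenvalues j := mul_nonneg (hp i) (heig0 i j)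
    have hs : ((Real.sqrt (p i * (hherm i).eigenvalues j) : ℝ) : ℂ)
        * ((Real.sqrt (p i * (hherm i).eigenvalues j) : ℝ) : ℂ)
        = ((p i : ℝ) : ℂ) * (((hherm i).eigenvalues j : ℝ) : ℂ) := by
      rw [← Complex.ofReal_mul, Real.mul_self_sqrt hnn, Complex.ofReal_mul]
    rw [hM]
    simp only [star_mul', Complex.star_def, Complex.conj_ofReal]
    linear_combination (Ui i k j * (starRingEnd ℂ) (Ui i l j)) * hs
  set F : Matrix (Fin d) (Fin d) ℂ := (hbar.eigenvectorUnitary : Matrix (Fin d) (Fin d) ℂ)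
    with hF
  have hCC : (star F * M) * (star F * M).conjTranspose
      = Matrix.diagonal (fun k => (hbar.eigenvalues k : ℂ)) := by
    rw [Matrix.conjTranspose_mul, ← Matrix.star_eq_conjTranspose (star F), star_star]
    calc star F * M * (M.conjTranspose * F)
        = star F * (M * M.conjTranspose) * F := by simp only [Matrix.mul_assoc]
      _ = star F * ρbar * F := by rw [hMM]
      _ = Matrix.diagonal (fun k => (hbar.eigenvalues k : ℂ)) := by
          rw [hF, ← Unitary.conjStarAlgAut_star_apply (S := ℂ), hbar.conjStarAlgAut_star_eigenvectorUnitary]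
          rfl
  have hq : ∀ m' : Fin N × Fin d, ∑ k, ‖(star F * M) k m'‖ ^ 2
      = p m'.1 * (hherm m'.1).eigenvalues m'.2 := by
    intro m'
    have e1 : (star F * M).conjTranspose * (star F * M) = M.conjTranspose * M := by
      rw [Matrix.conjTranspose_mul, ← Matrix.star_eq_conjTranspose (star F), star_star]
      calc M.conjTranspose * F * (star F * M)
          = M.conjTranspose * (F * star F) * M := by simp only [Matrix.mul_assoc]
        _ = M.conjTranspose * M := by
            rw [hF, ← Unitary.coe_star, Unitary.coe_mul_star_self, Matrix.mul_one]
    have e2 := conjTranspose_mul_self_diag (star F * M) m'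
    rw [e1, conjTranspose_mul_self_diag M m'] at e2
    have e3 : (∑ k, ‖(star F * M) k m'‖ ^ 2 : ℝ) = ∑ k, ‖M k m'‖ ^ 2 := by
      exact_mod_cast e2.symm
    rw [e3]
    obtain ⟨i, j⟩ := m'
    have hnn : 0 ≤ p i * (hherm i).eigenvalues j := mul_nonneg (hp i) (heig0 i j)
    have e4 : ∀ k, ‖M k (i, j)‖ ^ 2
        = (p i * (hherm i).eigenvalues j) * ‖Ui i k j‖ ^ 2 := by
      intro k
      rw [hM]
      simp only [norm_mul, mul_pow, Complex.norm_real, Real.norm_eq_abs,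
        sq_abs, Real.sq_sqrt hnn]
    rw [Finset.sum_congr rfl fun k _ => e4 k, ← Finset.mul_sum]
    have hcol : ∑ k, ‖Ui i k j‖ ^ 2 = 1 := by
      have h5 := conjTranspose_mul_self_diag
        ((hherm i).eigenvectorUnitary : Matrix (Fin d) (Fin d) ℂ) j
      rw [← Matrix.star_eq_conjTranspose, Unitary.coe_star_mul_self,
        Matrix.one_apply_eq] at h5
      have h6 : (∑ k, ‖((hherm i).eigenvectorUnitary : Matrix (Fin d) (Fin d) ℂ) k j‖ ^ 2 : ℝ)
          = 1 := by exact_mod_cast h5.symm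
      simpa [hUi] using h6
    rw [hcol, mul_one]
  calc vN ρbar = ∑ k, Real.negMulLog (hbar.eigenvalues k) := vN_eq_sum hbar
    _ ≤ ∑ m', Real.negMulLog (∑ k, ‖(star F * M) k m'‖ ^ 2) :=
        crux (star F * M) hbar.eigenvalues hCC
    _ = ∑ m' : Fin N × Fin d, Real.negMulLog (p m'.1 * (hherm m'.1).eigenvalues m'.2) :=
        Finset.sum_congr rfl fun m' _ => by rw [hq m']
    _ = ∑ i, (Real.negMulLog (p i) + p i * vN (ρ i)) := by
        rw [Fintype.sum_prod_type]
        refine Finset.sum_congr rfl fun i _ => ?_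
        rw [vN_eq_sum (hherm i)]
        rw [Finset.sum_congr rfl fun j _ =>
          Real.negMulLog_mul (p i) ((hherm i).eigenvalues j)]
        rw [Finset.sum_add_distrib, ← Finset.sum_mul, ← Finset.mul_sum, heigsum i, one_mul]
    _ = ∑ i, Real.negMulLog (p i) + ∑ i, p i * vN (ρ i) := Finset.sum_add_distrib
    _ ≤ ∑ i, p i * vN (ρ i) + Real.log N := by
        have := sum_negMulLog_le_log_card hN p hp hp1
        linarith
end
end

section
/- For density matrices ρ₁,…,ρ_N and a probability distribution (p₁,…,p_N), the von Neumann entropy of the mixture is bounded by H(∑ᵢ pᵢ ρᵢ) ≤ ∑ᵢ pᵢ H(ρᵢ) + H(p), where H(p) = -∑ᵢ pᵢ log pᵢ is the Shannon entropy of the distribution. -/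
noncomputable section
open scoped BigOperators ComplexOrder

namespace VNAux
open Matrix

variable {n : Type*} [Fintype n] [DecidableEq n]

omit [Fintype n] in
lemma diag_eq (f g : n → ℂ) (h : ∀ k, f k = g k) : diagonal f = diagonal g := by
  have : f = g := funext h
  rw [this]

omit [Fintype n] in
lemma diag_sub (f g : n → ℂ) : diagonal f - diagonal g = diagonal (fun k => f k - g k) := by
  ext i j
  by_cases h : i = j <;> simp [Matrix.diagonal_apply, h]

/-- Pairing: trace of `A * hB.cfc f` in `B`'s eigenframe. -/
lemma trace_mul_cfc {B : Matrix n n ℂ} (hB : B.IsHermitian) (A : Matrix n n ℂ) (f : ℝ → ℝ) :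
    (A * hB.cfc f).trace =
      ∑ k, (star (hB.eigenvectorUnitary : Matrix n n ℂ) * A *
        (hB.eigenvectorUnitary : Matrix n n ℂ)) k k * (f (hB.eigenvalues k) : ℂ) := by
  set U := (hB.eigenvectorUnitary : Matrix n n ℂ)
  have h0 : A * hB.cfc f = (A * U) * (diagonal (RCLike.ofReal ∘ f ∘ hB.eigenvalues)) * star U := by
    show A * (U * (diagonal (RCLike.ofReal ∘ f ∘ hB.eigenvalues)) * star U) = _
    noncomm_ring
  rw [h0, Matrix.trace_mul_cycle]
  have h2 : star U * (A * U) * diagonal (RCLike.ofReal ∘ f ∘ hB.eigenvalues)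
      = (star U * A * U) * diagonal (RCLike.ofReal ∘ f ∘ hB.eigenvalues) := by noncomm_ring
  rw [h2, Matrix.trace]
  simp [Matrix.diag, Matrix.mul_diagonal]

lemma conj_eigen_diag {B : Matrix n n ℂ} (hB : B.IsHermitian) (k : n) :
    (star (hB.eigenvectorUnitary : Matrix n n ℂ) * B *
      (hB.eigenvectorUnitary : Matrix n n ℂ)) k k = (hB.eigenvalues k : ℂ) := by
  have hc := hB.conjStarAlgAut_star_eigenvectorUnitary
  simp only [Unitary.conjStarAlgAut_apply, Unitary.coe_star, star_star] at hc
  rw [hc]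
  simp

/-- cfc congruence: only values at eigenvalues matter. -/
lemma cfc_congr' {B : Matrix n n ℂ} (hB : B.IsHermitian) {f g : ℝ → ℝ}
    (h : ∀ k, f (hB.eigenvalues k) = g (hB.eigenvalues k)) : hB.cfc f = hB.cfc g := by
  unfold Matrix.IsHermitian.cfc
  rw [diag_eq (RCLike.ofReal ∘ f ∘ hB.eigenvalues) (RCLike.ofReal ∘ g ∘ hB.eigenvalues)
    (fun k => by simp [h k])]

lemma cfc_mul {B : Matrix n n ℂ} (hB : B.IsHermitian) (f g : ℝ → ℝ) :
    hB.cfc f * hB.cfc g = hB.cfc (fun x => f x * g x) := by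
  unfold Matrix.IsHermitian.cfc
  simp only [Unitary.conjStarAlgAut_apply]
  set U := (hB.eigenvectorUnitary : Matrix n n ℂ)
  have hU : star U * U = 1 := Matrix.mem_unitaryGroup_iff'.mp hB.eigenvectorUnitary.2
  calc U * diagonal (RCLike.ofReal ∘ f ∘ hB.eigenvalues) * star U *
        (U * diagonal (RCLike.ofReal ∘ g ∘ hB.eigenvalues) * star U)
      = U * diagonal (RCLike.ofReal ∘ f ∘ hB.eigenvalues) * (star U * U) *
          diagonal (RCLike.ofReal ∘ g ∘ hB.eigenvalues) * star U := by noncomm_ring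
    _ = U * (diagonal (RCLike.ofReal ∘ f ∘ hB.eigenvalues) *
          diagonal (RCLike.ofReal ∘ g ∘ hB.eigenvalues)) * star U := by rw [hU]; noncomm_ring
    _ = _ := by
          rw [Matrix.diagonal_mul_diagonal, diag_eq _ (RCLike.ofReal ∘ (fun x => f x * g x) ∘
            hB.eigenvalues) (fun k => by simp)]

lemma cfc_one' {B : Matrix n n ℂ} (hB : B.IsHermitian) : hB.cfc (fun _ => 1) = 1 := by
  unfold Matrix.IsHermitian.cfc
  have hU : (hB.eigenvectorUnitary : Matrix n n ℂ) *
      star (hB.eigenvectorUnitary : Matrix n n ℂ) = 1 :=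
    Matrix.mem_unitaryGroup_iff.mp hB.eigenvectorUnitary.2
  rw [diag_eq _ (fun _ => 1) (fun k => by simp), ← Matrix.diagonal_one]
  simpa using hU

lemma cfc_sub' {B : Matrix n n ℂ} (hB : B.IsHermitian) (f g : ℝ → ℝ) :
    hB.cfc f - hB.cfc g = hB.cfc (fun x => f x - g x) := by
  unfold Matrix.IsHermitian.cfc
  simp only [Unitary.conjStarAlgAut_apply]
  rw [← Matrix.sub_mul, ← Matrix.mul_sub, diag_sub]
  congr 2
  exact diag_eq _ _ (fun k => by simp)

lemma cfc_add' {B : Matrix n n ℂ} (hB : B.IsHermitian) (f g : ℝ → ℝ) :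
    hB.cfc f + hB.cfc g = hB.cfc (fun x => f x + g x) := by
  have := cfc_sub' hB (fun x => f x + g x) g
  simp only [add_sub_cancel_right] at this
  rw [← this]; abel

lemma cfc_id' {B : Matrix n n ℂ} (hB : B.IsHermitian) : hB.cfc (fun x => x) = B := by
  conv_rhs => rw [hB.spectral_theorem]
  rfl

lemma cfc_smul_one {B : Matrix n n ℂ} (hB : B.IsHermitian) (c : ℝ) :
    hB.cfc (fun _ => c) = (c : ℂ) • 1 := by
  unfold Matrix.IsHermitian.cfc
  have hU : (hB.eigenvectorUnitary : Matrix n n ℂ) *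
      star (hB.eigenvectorUnitary : Matrix n n ℂ) = 1 :=
    Matrix.mem_unitaryGroup_iff.mp hB.eigenvectorUnitary.2
  have hd : diagonal (RCLike.ofReal ∘ (fun _ : ℝ => c) ∘ hB.eigenvalues)
      = (c : ℂ) • (1 : Matrix n n ℂ) := by
    ext i j
    by_cases h : i = j <;> simp [Matrix.diagonal_apply, h]
  simp only [Unitary.conjStarAlgAut_apply]
  rw [hd, Matrix.mul_smul, Matrix.smul_mul, Matrix.mul_one, hU]

lemma cfc_add_const {B : Matrix n n ℂ} (hB : B.IsHermitian) (c : ℝ) :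
    hB.cfc (fun x : ℝ => x + c) = B + (c : ℂ) • 1 := by
  conv_rhs => rw [← cfc_id' hB, ← cfc_smul_one hB c]
  exact (cfc_add' hB _ _).symm

/-- cfc of a function nonneg on eigenvalues is PSD. -/
lemma cfc_posSemidef {B : Matrix n n ℂ} (hB : B.IsHermitian) {f : ℝ → ℝ}
    (hf : ∀ k, 0 ≤ f (hB.eigenvalues k)) : (hB.cfc f).PosSemidef := by
  unfold Matrix.IsHermitian.cfc
  simp only [Unitary.conjStarAlgAut_apply]
  have hd : (diagonal (RCLike.ofReal ∘ f ∘ hB.eigenvalues) : Matrix n n ℂ).PosSemidef := by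
    refine Matrix.PosSemidef.diagonal fun k => ?_
    simpa using Complex.zero_le_real.mpr (hf k)
  have := hd.mul_mul_conjTranspose_same (hB.eigenvectorUnitary : Matrix n n ℂ)
  rwa [← Matrix.star_eq_conjTranspose] at this


variable {n : Type*} [Fintype n] [DecidableEq n]

lemma PosSemidef.diag_nonneg {M : Matrix n n ℂ} (hM : M.PosSemidef) (k : n) :
    0 ≤ M k k := by
  exact hM.diag_nonneg (i := k)

lemma PosSemidef.diag_re {M : Matrix n n ℂ} (hM : M.PosSemidef) (k : n) :
    M k k = ((M k k).re : ℂ) := by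
  have h := PosSemidef.diag_nonneg hM k
  rw [Complex.nonneg_iff] at h
  exact Complex.ext rfl h.2.symm

lemma PosSemidef.trace_re_nonneg {M : Matrix n n ℂ} (hM : M.PosSemidef) :
    0 ≤ M.trace.re := by
  rw [Matrix.trace]
  have : (∑ k, M.diag k).re = ∑ k, (M.diag k).re := by
    simpa using Complex.re_sum Finset.univ M.diag
  rw [this]
  exact Finset.sum_nonneg fun k _ => by
    have := PosSemidef.diag_nonneg hM k
    rw [Complex.nonneg_iff] at this
    exact this.1

lemma trace_mul_psd_nonneg {A M : Matrix n n ℂ} (hA : A.PosSemidef) (hM : M.PosSemidef) :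
    0 ≤ (A * M).trace.re := by
  set S := hA.1.cfc Real.sqrt with hS
  have hs : S * S = A := by
    rw [hS, cfc_mul hA.1, cfc_congr' hA.1 (g := fun x => x)
      (fun k => Real.mul_self_sqrt (hA.eigenvalues_nonneg k)), cfc_id' hA.1]
  have hSpsd : S.PosSemidef := cfc_posSemidef hA.1 fun k => Real.sqrt_nonneg _
  have h1 : (A * M).trace = (S * M * S).trace := by
    rw [Matrix.trace_mul_cycle, Matrix.mul_assoc, ← Matrix.mul_assoc, hs]
  rw [h1]
  refine PosSemidef.trace_re_nonneg ?_
  have := hM.mul_mul_conjTranspose_same S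
  rwa [hSpsd.1.eq] at this

lemma sum_eigenvalues_eq_trace {A : Matrix n n ℂ} (hA : A.IsHermitian) :
    (∑ k, (hA.eigenvalues k : ℂ)) = A.trace := by
  conv_rhs => rw [hA.spectral_theorem, Unitary.conjStarAlgAut_apply]
  rw [Matrix.trace_mul_cycle]
  have hU : star (hA.eigenvectorUnitary : Matrix n n ℂ) *
      (hA.eigenvectorUnitary : Matrix n n ℂ) = 1 :=
    Matrix.mem_unitaryGroup_iff'.mp hA.eigenvectorUnitary.2
  rw [hU, Matrix.one_mul, Matrix.trace_diagonal]
  rfl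

omit [DecidableEq n] in
/-- smul of PSD by nonneg real is PSD -/
lemma PosSemidef.smul_real {A : Matrix n n ℂ} (hA : A.PosSemidef) {p : ℝ} (hp : 0 ≤ p) :
    ((p : ℂ) • A).PosSemidef := by
  exact hA.smul (Complex.zero_le_real.mpr hp)

omit [DecidableEq n] in
lemma posSemidef_sum {ι : Type*} (s : Finset ι) (f : ι → Matrix n n ℂ)
    (h : ∀ i ∈ s, (f i).PosSemidef) : (∑ i ∈ s, f i).PosSemidef := by
  classical
  induction s using Finset.induction_on with
  | empty => simpa using Matrix.PosSemidef.zero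
  | insert a s hx ih =>
    rw [Finset.sum_insert hx]
    exact (h _ (Finset.mem_insert_self _ _)).add
      (ih fun i hi => h i (Finset.mem_insert_of_mem hi))


variable {n : Type*} [Fintype n] [DecidableEq n]

lemma dotProduct_self_eigenvectorBasis {M : Matrix n n ℂ} (hM : M.IsHermitian) (j : n) :
    star (⇑(hM.eigenvectorBasis j)) ⬝ᵥ ⇑(hM.eigenvectorBasis j) = 1 := by
  rw [dotProduct_comm, ← EuclideanSpace.inner_eq_star_dotProduct]
  have := hM.eigenvectorBasis.orthonormal.1 j
  rw [inner_self_eq_norm_sq_to_K (𝕜 := ℂ) (E := EuclideanSpace ℂ n), this]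
  simp

lemma eigenvalues_ge_one {M : Matrix n n ℂ} (hM : M.IsHermitian)
    (h1 : (M - 1).PosSemidef) (j : n) : 1 ≤ hM.eigenvalues j := by
  have hquad := h1.re_dotProduct_nonneg (⇑(hM.eigenvectorBasis j))
  have hmv : (M - 1) *ᵥ ⇑(hM.eigenvectorBasis j)
      = M *ᵥ ⇑(hM.eigenvectorBasis j) - ⇑(hM.eigenvectorBasis j) := by
    rw [Matrix.sub_mulVec, Matrix.one_mulVec]
  rw [hmv, dotProduct_sub, map_sub] at hquad
  have h2 := hM.eigenvalues_eq j
  have h3 : (star (⇑(hM.eigenvectorBasis j)) ⬝ᵥ ⇑(hM.eigenvectorBasis j)) = 1 :=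
    dotProduct_self_eigenvectorBasis hM j
  rw [h3, ← h2] at hquad
  simp only [RCLike.one_re] at hquad
  linarith

lemma cfc_inv' {M : Matrix n n ℂ} (hM : M.IsHermitian)
    (h : ∀ k, hM.eigenvalues k ≠ 0) : M⁻¹ = hM.cfc (fun x => x⁻¹) := by
  apply Matrix.inv_eq_right_inv
  have h1 : hM.cfc (fun x => x) * hM.cfc (fun x => x⁻¹) = 1 := by
    rw [cfc_mul hM, cfc_congr' hM (g := fun _ => 1) (fun k => mul_inv_cancel₀ (h k)), cfc_one' hM]
  rwa [cfc_id' hM] at h1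

lemma smul_one_posDef {c : ℝ} (hc : 0 < c) : ((c : ℂ) • (1 : Matrix n n ℂ)).PosDef := by
  have hd : ((c : ℂ) • (1 : Matrix n n ℂ)) = diagonal (fun _ => (c : ℂ)) := by
    ext i j
    by_cases h : i = j <;> simp [Matrix.diagonal_apply, h]
  rw [hd]
  exact Matrix.posDef_diagonal_iff.mpr fun _ => by exact_mod_cast hc

lemma add_smul_one_posDef {A : Matrix n n ℂ} (hA : A.PosSemidef) {c : ℝ} (hc : 0 < c) :
    (A + (c : ℂ) • 1).PosDef := by
  rw [add_comm]
  exact (smul_one_posDef hc).add_posSemidef hA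

/-- Operator antitonicity of the inverse. -/
lemma inv_sub_inv_psd {X Y : Matrix n n ℂ} (hX : X.PosDef) (hY : Y.PosDef)
    (hXY : (Y - X).PosSemidef) : (X⁻¹ - Y⁻¹).PosSemidef := by
  have hXs := hX.posSemidef
  set R := hXs.1.cfc Real.sqrt with hRdef
  have hRps : R.PosSemidef := cfc_posSemidef hXs.1 fun k => Real.sqrt_nonneg _
  have hRR : R * R = X := by
    rw [hRdef, cfc_mul hXs.1, cfc_congr' hXs.1 (g := fun x => x)
      (fun k => Real.mul_self_sqrt (hXs.eigenvalues_nonneg k)), cfc_id' hXs.1]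
  have hdetX : IsUnit X.det := (Matrix.isUnit_iff_isUnit_det X).mp hX.isUnit
  have hdetR : IsUnit R.det := by
    rw [← hRR, Matrix.det_mul] at hdetX
    exact isUnit_of_mul_isUnit_left hdetX
  have hdetY : IsUnit Y.det := (Matrix.isUnit_iff_isUnit_det Y).mp hY.isUnit
  set Ri := R⁻¹ with hRidef
  have hRiR : Ri * R = 1 := Matrix.nonsing_inv_mul R hdetR
  have hRRi : R * Ri = 1 := Matrix.mul_nonsing_inv R hdetR
  have hRih : Riᴴ = Ri := by rw [hRidef, Matrix.conjTranspose_nonsing_inv, hRps.1.eq]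
  set M := Ri * Y * Ri with hMdef
  have hMherm : M.IsHermitian := by
    have := Matrix.isHermitian_conjTranspose_mul_mul Ri hY.1
    rwa [hRih] at this
  have hM1 : (M - 1).PosSemidef := by
    have hXc : Ri * X * Ri = 1 := by
      rw [← hRR, ← Matrix.mul_assoc, Matrix.mul_assoc (Ri * R), hRiR, hRRi, Matrix.one_mul]
    have hc := hXY.conjTranspose_mul_mul_same Ri
    rw [hRih] at hc
    have he : Ri * (Y - X) * Ri = M - 1 := by
      rw [Matrix.mul_sub, Matrix.sub_mul, hXc]
    rwa [he] at hc
  have heig : ∀ j, 1 ≤ hMherm.eigenvalues j := fun j => eigenvalues_ge_one hMherm hM1 j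
  have hMinv : M⁻¹ = hMherm.cfc (fun x => x⁻¹) :=
    cfc_inv' hMherm fun k => by have := heig k; positivity
  have hpsd : (1 - M⁻¹).PosSemidef := by
    rw [hMinv, ← cfc_one' hMherm, cfc_sub' hMherm]
    exact cfc_posSemidef hMherm fun k =>
      sub_nonneg.mpr (inv_le_one_of_one_le₀ (heig k))
  have hconj := hpsd.conjTranspose_mul_mul_same Ri
  rw [hRih] at hconj
  have hkey : Ri * (1 - M⁻¹) * Ri = X⁻¹ - Y⁻¹ := by
    have hXinv : X⁻¹ = Ri * Ri := by rw [← hRR, Matrix.mul_inv_rev]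
    have hMi : M⁻¹ = R * Y⁻¹ * R := by
      rw [hMdef, Matrix.mul_inv_rev, Matrix.mul_inv_rev, Matrix.nonsing_inv_nonsing_inv R hdetR,
        Matrix.mul_assoc]
    have hYinv : Ri * M⁻¹ * Ri = Y⁻¹ := by
      rw [hMi, ← Matrix.mul_assoc, ← Matrix.mul_assoc, Matrix.mul_assoc (Ri * R),
        hRiR, Matrix.one_mul, Matrix.mul_assoc, hRRi, Matrix.mul_one]
    rw [Matrix.mul_sub, Matrix.sub_mul, Matrix.mul_one, hXinv, hYinv]
  rwa [hkey] at hconj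



lemma tendsto_log_sub_log (x δ : ℝ) (hx : 0 ≤ x) (hδ : 0 < δ) :
    Filter.Tendsto (fun s => Real.log (x + δ + s) - Real.log (δ + s))
      Filter.atTop (nhds 0) := by
  have hmain : Filter.Tendsto (fun s => Real.log (1 + x / (δ + s))) Filter.atTop (nhds 0) := by
    have h1 : Filter.Tendsto (fun s : ℝ => δ + s) Filter.atTop Filter.atTop :=
      Filter.tendsto_atTop_add_const_left _ δ Filter.tendsto_id
    have h2 : Filter.Tendsto (fun s : ℝ => x / (δ + s)) Filter.atTop (nhds 0) :=
      Filter.Tendsto.div_atTop tendsto_const_nhds h1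
    have h3 : Filter.Tendsto (fun s : ℝ => 1 + x / (δ + s)) Filter.atTop (nhds 1) := by
      simpa using h2.const_add 1
    have h4 := (Real.continuousAt_log one_ne_zero).tendsto.comp h3
    simpa [Function.comp_def] using h4
  refine hmain.congr' ?_
  filter_upwards [Filter.eventually_gt_atTop 0] with s hs
  have h5 : 0 < δ + s := by linarith
  have h6 : 0 < x + δ + s := by linarith
  rw [← Real.log_div h6.ne' h5.ne']
  congr 1
  field_simp
  ring

lemma scalar_key {ι κ : Type*} [Fintype ι] [Fintype κ] (a : ι → ℝ) (d μ : κ → ℝ)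
    (ha : ∀ j, 0 ≤ a j) (hd0 : ∀ k, 0 ≤ d k) (hdμ : ∀ k, d k ≤ μ k)
    (hsum : ∑ k, d k = ∑ j, a j)
    (hstep : ∀ c : ℝ, 0 < c → ∑ k, d k / (μ k + c) ≤ ∑ j, a j / (a j + c)) :
    ∑ j, a j * Real.log (a j) ≤ ∑ k, d k * Real.log (μ k) := by
  have hμ : ∀ k, 0 ≤ μ k := fun k => le_trans (hd0 k) (hdμ k)
  -- Step A: regularized inequality
  have stepA : ∀ δ : ℝ, 0 < δ →
      ∑ j, a j * Real.log (a j + δ) ≤ ∑ k, d k * Real.log (μ k + δ) := by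
    intro δ hδ
    set h : ℝ → ℝ := fun s =>
      (∑ k, d k * Real.log (μ k + δ + s)) - ∑ j, a j * Real.log (a j + δ + s) with hh
    have hder : ∀ s : ℝ, 0 ≤ s → HasDerivAt h
        ((∑ k, d k * ((μ k + δ + s)⁻¹ * 1)) - ∑ j, a j * ((a j + δ + s)⁻¹ * 1)) s := by
      intro s hs
      apply HasDerivAt.sub
      · apply HasDerivAt.fun_sum
        intro k _
        exact ((Real.hasDerivAt_log (by have := hμ k; exact ne_of_gt (by linarith) : μ k + δ + s ≠ 0)).comp s
          ((hasDerivAt_id s).const_add (μ k + δ))).const_mul (d k)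
      · apply HasDerivAt.fun_sum
        intro j _
        exact ((Real.hasDerivAt_log (by have := ha j; exact ne_of_gt (by linarith) : a j + δ + s ≠ 0)).comp s
          ((hasDerivAt_id s).const_add (a j + δ))).const_mul (a j)
    have hanti : AntitoneOn h (Set.Ici 0) := by
      apply antitoneOn_of_deriv_nonpos (convex_Ici 0)
      · exact fun s hs => ((hder s hs).continuousAt).continuousWithinAt
      · intro s hs
        rw [interior_Ici] at hs
        exact ((hder s (le_of_lt hs)).differentiableAt).differentiableWithinAt
      · intro s hs
        rw [interior_Ici] at hs
        rw [(hder s (le_of_lt hs)).deriv]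
        have hs' := Set.mem_Ioi.mp hs
        have := hstep (δ + s) (by linarith)
        simp only [mul_one, ← add_assoc] at this ⊢
        rw [sub_nonpos]
        calc (∑ k, d k * (μ k + δ + s)⁻¹) = ∑ k, d k / (μ k + δ + s) := by
              simp [div_eq_mul_inv]
          _ ≤ ∑ j, a j / (a j + δ + s) := this
          _ = ∑ j, a j * (a j + δ + s)⁻¹ := by simp [div_eq_mul_inv]
    have htend : Filter.Tendsto h Filter.atTop (nhds 0) := by
      have hexp : ∀ s : ℝ, (∑ k, d k * (Real.log (μ k + δ + s) - Real.log (δ + s)))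
          - (∑ j, a j * (Real.log (a j + δ + s) - Real.log (δ + s))) = h s := by
        intro s
        have e1 : ∑ k, d k * Real.log (δ + s) = ∑ j, a j * Real.log (δ + s) := by
          rw [← Finset.sum_mul, ← Finset.sum_mul, hsum]
        simp only [hh, mul_sub, Finset.sum_sub_distrib]
        rw [e1]
        ring
      have hbig : Filter.Tendsto (fun s => (∑ k, d k * (Real.log (μ k + δ + s) -
          Real.log (δ + s))) - (∑ j, a j * (Real.log (a j + δ + s) - Real.log (δ + s))))
          Filter.atTop (nhds 0) := by
        have t1 : Filter.Tendsto (fun s => ∑ k, d k * (Real.log (μ k + δ + s) -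
            Real.log (δ + s))) Filter.atTop (nhds 0) := by
          have := tendsto_finset_sum (Finset.univ : Finset κ)
            (fun k _ => (tendsto_log_sub_log (μ k) δ (hμ k) hδ).const_mul (d k))
          simpa using this
        have t2 : Filter.Tendsto (fun s => ∑ j, a j * (Real.log (a j + δ + s) -
            Real.log (δ + s))) Filter.atTop (nhds 0) := by
          have := tendsto_finset_sum (Finset.univ : Finset ι)
            (fun j _ => (tendsto_log_sub_log (a j) δ (ha j) hδ).const_mul (a j))
          simpa using this
        simpa using t1.sub t2
      exact hbig.congr hexp
    have h0 : 0 ≤ h 0 := by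
      refine le_of_tendsto htend ?_
      filter_upwards [Filter.eventually_ge_atTop 0] with s hs
      exact hanti (Set.self_mem_Ici) hs hs
    rw [hh] at h0
    simp only [add_zero] at h0
    linarith
  -- Step B: take δ → 0⁺
  have hG : Filter.Tendsto (fun δ => ∑ j, a j * Real.log (a j + δ))
      (nhdsWithin 0 (Set.Ioi 0)) (nhds (∑ j, a j * Real.log (a j))) := by
    apply tendsto_finset_sum
    intro j _
    rcases eq_or_lt_of_le (ha j) with hj | hj
    · simp only [← hj, zero_mul]
      exact tendsto_const_nhds
    · have hc : ContinuousAt (fun δ : ℝ => a j * Real.log (a j + δ)) 0 :=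
        ContinuousAt.mul continuousAt_const ((Real.continuousAt_log
          (by simpa using ne_of_gt hj)).comp (continuousAt_const.add continuousAt_id))
      have := hc.tendsto.mono_left (nhdsWithin_le_nhds (s := Set.Ioi (0:ℝ)))
      simpa using this
  have hF : Filter.Tendsto (fun δ => ∑ k, d k * Real.log (μ k + δ))
      (nhdsWithin 0 (Set.Ioi 0)) (nhds (∑ k, d k * Real.log (μ k))) := by
    apply tendsto_finset_sum
    intro k _
    rcases eq_or_lt_of_le (hμ k) with hk | hk
    · have hdk : d k = 0 := le_antisymm (hk ▸ hdμ k) (hd0 k)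
      simp only [hdk, zero_mul]
      exact tendsto_const_nhds
    · have hc : ContinuousAt (fun δ : ℝ => d k * Real.log (μ k + δ)) 0 :=
        ContinuousAt.mul continuousAt_const ((Real.continuousAt_log
          (by simpa using ne_of_gt hk)).comp (continuousAt_const.add continuousAt_id))
      have := hc.tendsto.mono_left (nhdsWithin_le_nhds (s := Set.Ioi (0:ℝ)))
      simpa using this
  refine le_of_tendsto_of_tendsto hG hF ?_
  filter_upwards [eventually_mem_nhdsWithin] with δ hδ
  exact stepA δ hδ


lemma trace_mul_cfc_re {B : Matrix n n ℂ} (hB : B.IsHermitian) {A : Matrix n n ℂ}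
    (hA : A.PosSemidef) (f : ℝ → ℝ) :
    (A * hB.cfc f).trace.re =
      ∑ k, ((star (hB.eigenvectorUnitary : Matrix n n ℂ) * A *
        (hB.eigenvectorUnitary : Matrix n n ℂ)) k k).re * f (hB.eigenvalues k) := by
  have hM : (star (hB.eigenvectorUnitary : Matrix n n ℂ) * A *
      (hB.eigenvectorUnitary : Matrix n n ℂ)).PosSemidef := by
    have := hA.conjTranspose_mul_mul_same (hB.eigenvectorUnitary : Matrix n n ℂ)
    rwa [← Matrix.star_eq_conjTranspose] at this
  rw [trace_mul_cfc hB A f]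
  rw [Complex.re_sum]
  refine Finset.sum_congr rfl fun k _ => ?_
  have him : ((star (hB.eigenvectorUnitary : Matrix n n ℂ) * A *
      (hB.eigenvectorUnitary : Matrix n n ℂ)) k k).im = 0 := by
    have := PosSemidef.diag_re hM k
    exact (congrArg Complex.im this).trans (Complex.ofReal_im _)
  simp [Complex.mul_re, him]

lemma trace_mul_cfc_self_re {A : Matrix n n ℂ} (hA : A.PosSemidef) (f : ℝ → ℝ) :
    (A * hA.1.cfc f).trace.re = ∑ j, hA.1.eigenvalues j * f (hA.1.eigenvalues j) := by
  rw [trace_mul_cfc hA.1 A f, Complex.re_sum]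
  refine Finset.sum_congr rfl fun j _ => ?_
  rw [conj_eigen_diag hA.1 j, ← Complex.ofReal_mul]
  exact Complex.ofReal_re _

lemma inv_add_smul_one {A : Matrix n n ℂ} (hA : A.PosSemidef) {c : ℝ} (hc : 0 < c) :
    (A + (c : ℂ) • 1)⁻¹ = hA.1.cfc (fun x => (x + c)⁻¹) := by
  apply Matrix.inv_eq_right_inv
  rw [← cfc_add_const hA.1 c, cfc_mul hA.1]
  rw [cfc_congr' hA.1 (g := fun _ => 1) fun k => ?_, cfc_one' hA.1]
  have := hA.eigenvalues_nonneg k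
  exact mul_inv_cancel₀ (by positivity)

/-- Key inequality: `tr(A log A) ≤ tr(A log B)` for PSD `A ≤ B`. -/
lemma key_trace_log {A B : Matrix n n ℂ} (hA : A.PosSemidef) (hB : B.PosSemidef)
    (hAB : (B - A).PosSemidef) :
    (A * hA.1.cfc Real.log).trace.re ≤ (A * hB.1.cfc Real.log).trace.re := by
  set U := (hB.1.eigenvectorUnitary : Matrix n n ℂ) with hU
  set M := star U * A * U with hMdef
  have hMpsd : M.PosSemidef := by
    have := hA.conjTranspose_mul_mul_same U
    rwa [← Matrix.star_eq_conjTranspose] at this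
  set d : n → ℝ := fun k => (M k k).re with hd
  set μ : n → ℝ := fun k => hB.1.eigenvalues k with hμdef
  set a : n → ℝ := fun j => hA.1.eigenvalues j with ha
  have hd0 : ∀ k, 0 ≤ d k := fun k => by
    have := PosSemidef.diag_nonneg hMpsd k
    rw [Complex.nonneg_iff] at this
    exact this.1
  have hdμ : ∀ k, d k ≤ μ k := by
    intro k
    have hpsd : (star U * (B - A) * U).PosSemidef := by
      have := hAB.conjTranspose_mul_mul_same U
      rwa [← Matrix.star_eq_conjTranspose] at this
    have h1 := PosSemidef.diag_nonneg hpsd k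
    rw [Complex.nonneg_iff] at h1
    have h2 : (star U * (B - A) * U) k k = (μ k : ℂ) - M k k := by
      rw [Matrix.mul_sub, Matrix.sub_mul]
      have := conj_eigen_diag hB.1 k
      simp only [Matrix.sub_apply]
      rw [← hU] at this
      rw [this]
    rw [h2] at h1
    have := h1.1
    simp only [Complex.sub_re, Complex.ofReal_re] at this
    linarith
  have hsum : ∑ k, d k = ∑ j, a j := by
    have h1 : M.trace = A.trace := by
      rw [hMdef, Matrix.trace_mul_cycle,
        Matrix.mem_unitaryGroup_iff.mp hB.1.eigenvectorUnitary.2, Matrix.one_mul]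
    have h2 : (∑ j, (a j : ℂ)) = A.trace := sum_eigenvalues_eq_trace hA.1
    have h3 : M.trace.re = ∑ k, d k := by
      rw [Matrix.trace, Complex.re_sum]; rfl
    have h4 : A.trace.re = ∑ j, a j := by
      rw [← h2, Complex.re_sum]
      exact Finset.sum_congr rfl fun j _ => Complex.ofReal_re _
    rw [← h3, h1, h4]
  have hae : ∀ j, 0 ≤ a j := fun j => hA.eigenvalues_nonneg j
  have hstep : ∀ c : ℝ, 0 < c → ∑ k, d k / (μ k + c) ≤ ∑ j, a j / (a j + c) := by
    intro c hc
    set X := A + (c : ℂ) • 1 with hX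
    set Y := B + (c : ℂ) • 1 with hY
    have hXpd : X.PosDef := add_smul_one_posDef hA hc
    have hYpd : Y.PosDef := add_smul_one_posDef hB hc
    have hYX : (Y - X).PosSemidef := by
      have : Y - X = B - A := by rw [hX, hY]; abel
      rwa [this]
    have hinv := inv_sub_inv_psd hXpd hYpd hYX
    have htr := trace_mul_psd_nonneg hA hinv
    have hXinv : X⁻¹ = hA.1.cfc (fun x => (x + c)⁻¹) := inv_add_smul_one hA hc
    have hYinv : Y⁻¹ = hB.1.cfc (fun x => (x + c)⁻¹) := inv_add_smul_one hB hc
    rw [Matrix.mul_sub, Matrix.trace_sub, Complex.sub_re, hXinv, hYinv] at htr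
    rw [trace_mul_cfc_self_re hA, trace_mul_cfc_re hB.1 hA] at htr
    have e1 : ∑ k, d k / (μ k + c) = ∑ k, d k * (μ k + c)⁻¹ := by
      simp [div_eq_mul_inv]
    have e2 : ∑ j, a j / (a j + c) = ∑ j, a j * (a j + c)⁻¹ := by
      simp [div_eq_mul_inv]
    rw [e1, e2]
    linarith
  have := scalar_key a d μ hae hd0 hdμ hsum hstep
  rw [trace_mul_cfc_self_re hA, trace_mul_cfc_re hB.1 hA]
  exact this


/-- scaling inside the functional calculus -/
lemma cfc_smul_log {ρ : Matrix n n ℂ} (hρ : ρ.PosSemidef) {p : ℝ} (hp : 0 < p)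
    (hsm : ((p : ℂ) • ρ).IsHermitian) :
    hsm.cfc Real.log = hρ.1.cfc (fun x => Real.log (p * x)) := by
  rw [← Matrix.IsHermitian.cfc_eq, ← Matrix.IsHermitian.cfc_eq]
  have hre : ((p : ℂ) • ρ) = p • ρ := by
    ext i j
    simp [Matrix.smul_apply, Complex.real_smul]
  rw [hre]
  have hρ' : IsSelfAdjoint ρ := hρ.1
  rw [← cfc_const_mul_id (R := ℝ) p ρ hρ']
  rw [← cfc_comp' Real.log (fun x => p * x) ρ
    ((Matrix.finite_real_spectrum.image _).continuousOn _)
    ((continuous_const.mul continuous_id).continuousOn) hρ']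

end VNAux

noncomputable section
open scoped BigOperators ComplexOrder

variable {n : Type*} [Fintype n] [DecidableEq n]

theorem entropy_mixture_le_avg_add_shannon
    {d N : ℕ} (ρ : Fin N → Matrix (Fin d) (Fin d) ℂ) (p : Fin N → ℝ)
    (hρ : ∀ i, IsDensity (ρ i)) (hp : ∀ i, 0 ≤ p i) (hp1 : ∑ i, p i = 1) :
    vN (∑ i, (p i : ℂ) • ρ i) ≤ ∑ i, p i * vN (ρ i) + (-∑ i, p i * Real.log (p i)) := by
  classical
  set ρbar := ∑ i, (p i : ℂ) • ρ i with hρbar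
  have hpsd_i : ∀ i, ((p i : ℂ) • ρ i).PosSemidef :=
    fun i => VNAux.PosSemidef.smul_real (hρ i).1 (hp i)
  have hbar : ρbar.PosSemidef :=
    VNAux.posSemidef_sum _ _ (fun i _ => hpsd_i i)
  have hsub : ∀ i, (ρbar - (p i : ℂ) • ρ i).PosSemidef := by
    intro i
    have h := Finset.sum_erase_add Finset.univ (fun j => (p j : ℂ) • ρ j) (Finset.mem_univ i)
    have he : ρbar - (p i : ℂ) • ρ i = ∑ j ∈ Finset.univ.erase i, (p j : ℂ) • ρ j := by
      rw [hρbar, ← h]; abel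
    rw [he]
    exact VNAux.posSemidef_sum _ _ (fun j _ => hpsd_i j)
  set L := matFun ρbar Real.log with hL
  have hLcfc : L = hbar.1.cfc Real.log := by
    rw [hL, matFun, dif_pos hbar.1]
  -- linearity of the trace pairing
  have hlin : ((ρbar * L).trace).re = ∑ i, p i * ((ρ i * L).trace).re := by
    rw [hρbar, Finset.sum_mul, Matrix.trace_sum, Complex.re_sum]
    refine Finset.sum_congr rfl fun i _ => ?_
    rw [smul_mul_assoc, Matrix.trace_smul]
    simp [Complex.mul_re]
  -- single-index inequality
  have hterm : ∀ i, -(p i * ((ρ i * L).trace).re)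
      ≤ p i * vN (ρ i) - p i * Real.log (p i) := by
    intro i
    rcases eq_or_lt_of_le (hp i) with hz | hpi
    · simp [← hz]
    · have hkey := VNAux.key_trace_log (hpsd_i i) hbar (hsub i)
      rw [← hLcfc] at hkey
      -- RHS of key
      have hR : (((p i : ℂ) • ρ i * L).trace).re = p i * ((ρ i * L).trace).re := by
        rw [smul_mul_assoc, Matrix.trace_smul]
        simp [Complex.mul_re]
      -- LHS of key
      have hcfc := VNAux.cfc_smul_log (hρ i).1 hpi ((hpsd_i i).1)
      have hSpec : (((p i : ℂ) • ρ i) * ((hpsd_i i).1.cfc Real.log)).trace.re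
          = p i * Real.log (p i) + p i * ((ρ i * matFun (ρ i) Real.log).trace).re := by
        rw [hcfc, smul_mul_assoc, Matrix.trace_smul]
        have h1 : ((ρ i) * ((hρ i).1.1.cfc (fun x => Real.log (p i * x)))).trace.re
            = ∑ j, (hρ i).1.1.eigenvalues j * Real.log (p i * (hρ i).1.1.eigenvalues j) :=
          VNAux.trace_mul_cfc_self_re (hρ i).1 _
        have h2 : ((ρ i) * matFun (ρ i) Real.log).trace.re
            = ∑ j, (hρ i).1.1.eigenvalues j * Real.log ((hρ i).1.1.eigenvalues j) := by
          rw [matFun, dif_pos (hρ i).1.1]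
          exact VNAux.trace_mul_cfc_self_re (hρ i).1 _
        have h3 : ∑ j, (hρ i).1.1.eigenvalues j = 1 := by
          have h5 := congrArg Complex.re
            ((VNAux.sum_eigenvalues_eq_trace (hρ i).1.1).trans (hρ i).2)
          rw [Complex.re_sum] at h5
          simpa using h5
        have h4 : ∑ j, (hρ i).1.1.eigenvalues j * Real.log (p i * (hρ i).1.1.eigenvalues j)
            = Real.log (p i) * (∑ j, (hρ i).1.1.eigenvalues j)
              + ∑ j, (hρ i).1.1.eigenvalues j * Real.log ((hρ i).1.1.eigenvalues j) := by
          rw [Finset.mul_sum, ← Finset.sum_add_distrib]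
          refine Finset.sum_congr rfl fun j _ => ?_
          rcases eq_or_lt_of_le ((hρ i).1.eigenvalues_nonneg j) with hl | hl
          · rw [← hl]; ring
          · rw [Real.log_mul (ne_of_gt hpi) (ne_of_gt hl)]; ring
        have hmulre : ∀ z : ℂ, ((p i : ℂ) • z).re = p i * z.re := by
          intro z; simp [Complex.mul_re]
        rw [hmulre, h1, h4, h3, h2]
        ring
      rw [hR, hSpec] at hkey
      have hvN : vN (ρ i) = -(((ρ i * matFun (ρ i) Real.log).trace).re) := by
        rw [vN, Complex.neg_re]
      rw [hvN]
      linarith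
  have hvNbar : vN ρbar = -(((ρbar * L).trace).re) := by
    rw [vN, Complex.neg_re, hL]
  rw [hvNbar, hlin]
  have hfinal := Finset.sum_le_sum (fun i (_ : i ∈ Finset.univ) => hterm i)
  rw [Finset.sum_sub_distrib] at hfinal
  have hneg : ∑ i, -(p i * ((ρ i * L).trace).re) = -∑ i, p i * ((ρ i * L).trace).re := by
    simp
  rw [hneg] at hfinal
  linarith
end
end
end

section
/- Let ω be a density matrix on a finite-dimensional Hilbert space with spectral decomposition ω = ∑_{λ∈spec(ω)} λ P_λ, and define the pinching map P_ω(X) := ∑_{λ∈spec(ω)} P_λ X P_λ. Then for every positive semidefinite operator X, |spec(ω)| · P_ω(X) ≥ X in the Loewner order, where |spec(ω)| is the number of distinct eigenvalues of ω. -/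
noncomputable section
open scoped BigOperators ComplexOrder

variable {n : Type*} [Fintype n] [DecidableEq n]

/-- The set of distinct (real) eigenvalues of a matrix (junk `∅` if not Hermitian). -/
noncomputable def specSet (A : Matrix n n ℂ) : Finset ℝ :=
  if h : A.IsHermitian then Finset.image h.eigenvalues Finset.univ else ∅

/-- The spectral projection of `A` onto the eigenspace of eigenvalue `lam`. -/
noncomputable def specProj (A : Matrix n n ℂ) (lam : ℝ) : Matrix n n ℂ :=
  matFun A (fun x => if x = lam then 1 else 0)

/-- The pinching map `P_ω(X) = ∑_{λ ∈ spec(ω)} P_λ X P_λ`. -/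
noncomputable def pinch (ω X : Matrix n n ℂ) : Matrix n n ℂ :=
  ∑ lam ∈ specSet ω, specProj ω lam * X * specProj ω lam

lemma specProj_isHermitian {A : Matrix n n ℂ} (hA : A.IsHermitian) (lam : ℝ) :
    (specProj A lam).IsHermitian := by
  rw [specProj, matFun, dif_pos hA, Matrix.IsHermitian.cfc, Unitary.conjStarAlgAut_apply,
    Matrix.star_eq_conjTranspose]
  exact Matrix.isHermitian_mul_mul_conjTranspose _
    (Matrix.isHermitian_diagonal_of_self_adjoint _ (by
      ext i; simp only [Pi.star_apply, Function.comp_apply, RCLike.star_def, RCLike.conj_ofReal]))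

lemma sum_specProj {A : Matrix n n ℂ} (hA : A.IsHermitian) :
    ∑ lam ∈ specSet A, specProj A lam = 1 := by
  simp only [specSet, specProj, matFun, dif_pos hA, Matrix.IsHermitian.cfc,
    Unitary.conjStarAlgAut_apply, Unitary.coe_star]
  rw [← Finset.sum_mul, ← Finset.mul_sum]
  have : ∑ lam ∈ Finset.image hA.eigenvalues Finset.univ,
      Matrix.diagonal (RCLike.ofReal ∘ (fun x => if x = lam then (1:ℝ) else 0) ∘ hA.eigenvalues)
        = (1 : Matrix n n ℂ) := by
    ext i j
    by_cases hij : i = j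
    · subst hij
      simp only [Matrix.sum_apply, Matrix.diagonal_apply_eq, Function.comp_apply,
        Matrix.one_apply_eq]
      simp only [apply_ite (RCLike.ofReal : ℝ → ℂ), map_one, map_zero]
      rw [Finset.sum_ite_eq (Finset.image hA.eigenvalues Finset.univ) (hA.eigenvalues i)
        (fun _ => (1:ℂ))]
      simp
    · simp [Matrix.sum_apply, Matrix.diagonal_apply_ne _ hij, Matrix.one_apply_ne hij]
  rw [this, mul_one]
  exact Unitary.coe_mul_star_self hA.eigenvectorUnitary

lemma posSemidef_smul {M : Matrix n n ℂ} (hM : M.PosSemidef) {c : ℂ} (hc : 0 ≤ c) :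
    (c • M).PosSemidef := by
  constructor
  · have hcc : star c = c := by
      rw [Complex.star_def, Complex.conj_eq_iff_im]
      exact ((Complex.nonneg_iff).mp hc).2.symm
    rw [Matrix.IsHermitian, Matrix.conjTranspose_smul, hM.1.eq, hcc]
  · intro x
    exact (hM.smul hc).2 x

lemma posSemidef_sum {ι : Type*} (s : Finset ι) (f : ι → Matrix n n ℂ)
    (h : ∀ i ∈ s, (f i).PosSemidef) : (∑ i ∈ s, f i).PosSemidef :=
  Finset.sum_induction f _ (fun _ _ ha hb => ha.add hb) Matrix.PosSemidef.zero h

/-- Pinching inequality: `|spec(ω)| ⬝ P_ω(X) ≥ X` in the Loewner order. -/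
theorem pinching_inequality {d : ℕ} (ω X : Matrix (Fin d) (Fin d) ℂ)
    (hω : IsDensity ω) (hX : X.PosSemidef) :
    (((specSet ω).card : ℂ) • pinch ω X - X).PosSemidef := by
  obtain ⟨hPSD, -⟩ := hω
  have hH : ω.IsHermitian := hPSD.isHermitian
  set S := specSet ω with hS
  set P := specProj ω with hP
  have hsum : ∑ lam ∈ S, P lam = 1 := sum_specProj hH
  have key : ∑ l ∈ S, ∑ m ∈ S, (P l - P m) * X * (P l - P m)
      = (2:ℂ) • (((S.card : ℂ) • pinch ω X - X)) := by
    have A1 : ∑ l ∈ S, ∑ _m ∈ S, P l * X * P l = (S.card : ℂ) • pinch ω X := by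
      simp only [Finset.sum_const]
      rw [← Finset.smul_sum, Nat.cast_smul_eq_nsmul, pinch]
    have A4 : ∑ _l ∈ S, ∑ m ∈ S, P m * X * P m = (S.card : ℂ) • pinch ω X := by
      rw [Finset.sum_const, Nat.cast_smul_eq_nsmul, pinch]
    have A2 : ∑ l ∈ S, ∑ m ∈ S, P l * X * P m = X := by
      have : ∀ l, ∑ m ∈ S, P l * X * P m = P l * X := by
        intro l
        rw [← Finset.mul_sum, hsum, mul_one]
      simp_rw [this]
      rw [← Finset.sum_mul, hsum, one_mul]
    have A3 : ∑ l ∈ S, ∑ m ∈ S, P m * X * P l = X := by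
      have : ∀ l, ∑ m ∈ S, P m * X * P l = X * P l := by
        intro l
        rw [← Finset.sum_mul, ← Finset.sum_mul, hsum, one_mul]
      simp_rw [this]
      rw [← Finset.mul_sum, hsum, mul_one]
    calc ∑ l ∈ S, ∑ m ∈ S, (P l - P m) * X * (P l - P m)
        = ∑ l ∈ S, ∑ m ∈ S,
            (P l * X * P l - P m * X * P l - (P l * X * P m - P m * X * P m)) := by
          apply Finset.sum_congr rfl; intro l _; apply Finset.sum_congr rfl; intro m _
          simp only [sub_mul, mul_sub]
      _ = ((∑ l ∈ S, ∑ _m ∈ S, P l * X * P l) - ∑ l ∈ S, ∑ m ∈ S, P m * X * P l)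
            - ((∑ l ∈ S, ∑ m ∈ S, P l * X * P m) - ∑ _l ∈ S, ∑ m ∈ S, P m * X * P m) := by
          simp only [Finset.sum_sub_distrib]
      _ = (2:ℂ) • (((S.card : ℂ) • pinch ω X - X)) := by
          rw [A1, A2, A3, A4, two_smul]
          abel
  have hgoal : ((S.card : ℂ) • pinch ω X - X)
      = (2⁻¹ : ℂ) • ∑ l ∈ S, ∑ m ∈ S, (P l - P m) * X * (P l - P m) := by
    rw [key, smul_smul]
    norm_num
  rw [hgoal]
  refine posSemidef_smul ?_ (by rw [Complex.le_def]; norm_num)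
  refine posSemidef_sum _ _ fun l _ => posSemidef_sum _ _ fun m _ => ?_
  have hherm : (P l - P m).IsHermitian :=
    (specProj_isHermitian hH l).sub (specProj_isHermitian hH m)
  have := hX.conjTranspose_mul_mul_same (P l - P m)
  rwa [hherm.eq] at this
end
end

section
/- For positive semidefinite matrices X, Y on a finite-dimensional Hilbert space and s ∈ (0,1), one has tr[X^s Y^{1-s}] ≥ tr[X(1 - {X-Y}₊)] + tr[Y {X-Y}₊], where {X-Y}₊ denotes the orthogonal projector onto the eigenspace of X-Y corresponding to strictly positive eigenvalues. -/
noncomputable section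
open scoped BigOperators ComplexOrder

variable {n : Type*} [Fintype n] [DecidableEq n]

/-- Fractional matrix power `X^s` via functional calculus (on the support; `0^s = 0`). -/
noncomputable def mpow (A : Matrix n n ℂ) (s : ℝ) : Matrix n n ℂ :=
  matFun A (fun x => x ^ s)

/-- Projector onto the eigenspace of strictly positive eigenvalues of `A`. -/
noncomputable def posProj (A : Matrix n n ℂ) : Matrix n n ℂ :=
  matFun A (fun x => if 0 < x then 1 else 0)

set_option linter.unusedSectionVars false

section AudAux
open Matrix MeasureTheory Set

namespace Aud
variable {n : Type*} [Fintype n] [DecidableEq n] {A B : Matrix n n ℂ}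

lemma umul (hA : A.IsHermitian) :
    star (hA.eigenvectorUnitary : Matrix n n ℂ) * hA.eigenvectorUnitary = 1 :=
  Unitary.coe_star_mul_self hA.eigenvectorUnitary

lemma umul' (hA : A.IsHermitian) :
    (hA.eigenvectorUnitary : Matrix n n ℂ) * star (hA.eigenvectorUnitary : Matrix n n ℂ) = 1 := by
  rw [← Unitary.coe_star]; exact Unitary.coe_mul_star_self hA.eigenvectorUnitary

lemma cfc_mul' (hA : A.IsHermitian) (f g : ℝ → ℝ) :
    hA.cfc f * hA.cfc g = hA.cfc (fun x => f x * g x) := by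
  unfold Matrix.IsHermitian.cfc
  simp only [Unitary.conjStarAlgAut_apply]
  have h : ∀ {a b c d e f : Matrix n n ℂ}, (a * b * c) * (d * e * f) = a * (b * (c * d) * e) * f := by
    intros; simp only [mul_assoc]
  rw [h, umul hA, mul_one, diagonal_mul_diagonal]
  have : (fun i => (RCLike.ofReal ∘ f ∘ hA.eigenvalues) i * (RCLike.ofReal ∘ g ∘ hA.eigenvalues) i)
      = (RCLike.ofReal ∘ (fun x => f x * g x) ∘ hA.eigenvalues : n → ℂ) := by
    funext i; simp
  rw [this]

lemma cfc_add' (hA : A.IsHermitian) (f g : ℝ → ℝ) :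
    hA.cfc f + hA.cfc g = hA.cfc (fun x => f x + g x) := by
  unfold Matrix.IsHermitian.cfc
  simp only [Unitary.conjStarAlgAut_apply]
  rw [← add_mul, ← mul_add, diagonal_add]
  have : (fun i => (RCLike.ofReal ∘ f ∘ hA.eigenvalues) i + (RCLike.ofReal ∘ g ∘ hA.eigenvalues) i)
      = (RCLike.ofReal ∘ (fun x => f x + g x) ∘ hA.eigenvalues : n → ℂ) := by
    funext i; simp
  rw [this]

lemma cfc_congr' (hA : A.IsHermitian) {f g : ℝ → ℝ}
    (h : ∀ i, f (hA.eigenvalues i) = g (hA.eigenvalues i)) : hA.cfc f = hA.cfc g := by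
  unfold Matrix.IsHermitian.cfc
  simp only [Unitary.conjStarAlgAut_apply]
  have : (RCLike.ofReal ∘ f ∘ hA.eigenvalues : n → ℂ) = RCLike.ofReal ∘ g ∘ hA.eigenvalues := by
    funext i; simp [h i]
  rw [this]

lemma cfc_one' (hA : A.IsHermitian) : hA.cfc (fun _ => 1) = 1 := by
  unfold Matrix.IsHermitian.cfc
  simp only [Unitary.conjStarAlgAut_apply]
  have : Matrix.diagonal (RCLike.ofReal ∘ (fun _ => (1:ℝ)) ∘ hA.eigenvalues) = (1 : Matrix n n ℂ) := by
    simp [Function.comp_def]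
  rw [this, mul_one, umul' hA]

lemma cfc_id' (hA : A.IsHermitian) : hA.cfc (fun x => x) = A := by
  unfold Matrix.IsHermitian.cfc
  simp only [Unitary.conjStarAlgAut_apply]
  exact hA.spectral_theorem.symm

lemma cfc_sub' (hA : A.IsHermitian) (f g : ℝ → ℝ) :
    hA.cfc f - hA.cfc g = hA.cfc (fun x => f x - g x) := by
  have := cfc_add' hA (fun x => f x - g x) g
  simp only [sub_add_cancel] at this
  rw [← this, add_sub_cancel_right]

lemma cfc_smul' (hA : A.IsHermitian) (c : ℝ) (f : ℝ → ℝ) :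
    c • hA.cfc f = hA.cfc (fun x => c * f x) := by
  unfold Matrix.IsHermitian.cfc
  simp only [Unitary.conjStarAlgAut_apply]
  rw [← smul_mul_assoc, ← mul_smul_comm, ← diagonal_smul]
  have : (c • (RCLike.ofReal ∘ f ∘ hA.eigenvalues) : n → ℂ)
      = RCLike.ofReal ∘ (fun x => c * f x) ∘ hA.eigenvalues := by
    funext i; simp [Complex.real_smul]
  rw [this]

lemma cfc_const' (hA : A.IsHermitian) (c : ℝ) : hA.cfc (fun _ => c) = c • 1 := by
  rw [show (fun _ : ℝ => c) = fun x => c * 1 by funext; ring, ← cfc_smul', cfc_one']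

lemma cfc_herm' (hA : A.IsHermitian) (f : ℝ → ℝ) : (hA.cfc f).IsHermitian := by
  unfold Matrix.IsHermitian.cfc
  simp only [Unitary.conjStarAlgAut_apply]
  show _ᴴ = _
  simp only [star_eq_conjTranspose, conjTranspose_mul, conjTranspose_conjTranspose,
    diagonal_conjTranspose, mul_assoc]
  have : (star (RCLike.ofReal ∘ f ∘ hA.eigenvalues) : n → ℂ)
      = RCLike.ofReal ∘ f ∘ hA.eigenvalues := by
    funext i; simp [Pi.star_def]
  rw [this]

lemma cfc_trace (hA : A.IsHermitian) (f : ℝ → ℝ) :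
    (hA.cfc f).trace = ↑(∑ i, f (hA.eigenvalues i)) := by
  unfold Matrix.IsHermitian.cfc
  simp only [Unitary.conjStarAlgAut_apply]
  rw [trace_mul_cycle, umul hA, one_mul, trace_diagonal]
  push_cast
  rfl

lemma cfc_quad (hA : A.IsHermitian) (f : ℝ → ℝ) (v : n → ℂ) :
    star v ⬝ᵥ (hA.cfc f) *ᵥ v =
      ↑(∑ i, f (hA.eigenvalues i) *
        Complex.normSq ((star (hA.eigenvectorUnitary : Matrix n n ℂ) *ᵥ v) i)) := by
  unfold Matrix.IsHermitian.cfc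
  simp only [Unitary.conjStarAlgAut_apply]
  set U := (hA.eigenvectorUnitary : Matrix n n ℂ)
  set y := star U *ᵥ v with hy
  rw [← mulVec_mulVec, ← mulVec_mulVec, dotProduct_mulVec (star v)]
  have hsv : star v ᵥ* U = star y := by rw [hy, star_mulVec, star_eq_conjTranspose, conjTranspose_conjTranspose]
  rw [hsv]
  simp only [dotProduct, mulVec_diagonal, Pi.star_apply, Function.comp_apply]
  push_cast
  refine Finset.sum_congr rfl fun i _ => ?_
  rw [← hy]
  rw [mul_left_comm]
  congr 1
  rw [RCLike.star_def, Complex.normSq_eq_conj_mul_self]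




lemma cfc_psd' (hA : A.IsHermitian) (f : ℝ → ℝ) (h : ∀ i, 0 ≤ f (hA.eigenvalues i)) :
    (hA.cfc f).PosSemidef := by
  unfold Matrix.IsHermitian.cfc
  simp only [Unitary.conjStarAlgAut_apply]
  rw [star_eq_conjTranspose]
  refine PosSemidef.mul_mul_conjTranspose_same ?_ _
  refine PosSemidef.diagonal fun i => ?_
  simpa using Complex.zero_le_real.mpr (h i)

lemma trace_nonneg' {A : Matrix n n ℂ} (hA : A.PosSemidef) : 0 ≤ A.trace := by
  rw [Matrix.trace]
  refine Finset.sum_nonneg fun i _ => ?_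
  simpa [Matrix.mulVec_single, dotProduct, Pi.single_apply] using hA.dotProduct_mulVec_nonneg (Pi.single i 1)

lemma trace_mul_nonneg {A B : Matrix n n ℂ} (hA : A.PosSemidef) (hB : B.PosSemidef) :
    0 ≤ (A * B).trace := by
  have hC := cfc_herm' hA.1 (fun x => Real.sqrt x)
  set C := hA.1.cfc (fun x => Real.sqrt x)
  have hCC : C * C = A := ((cfc_mul' hA.1 _ _).trans (cfc_congr' hA.1 (g := fun x => x) fun i =>
    Real.mul_self_sqrt (hA.eigenvalues_nonneg i))).trans (cfc_id' hA.1)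
  rw [← hCC, Matrix.mul_assoc, Matrix.trace_mul_comm]
  have := hB.mul_mul_conjTranspose_same C
  rw [(hC : Cᴴ = C)] at this
  exact trace_nonneg' this

lemma cfc_mul_eq (hA : A.IsHermitian) {f g fg : ℝ → ℝ}
    (h : ∀ i, f (hA.eigenvalues i) * g (hA.eigenvalues i) = fg (hA.eigenvalues i)) :
    hA.cfc f * hA.cfc g = hA.cfc fg :=
  (cfc_mul' hA f g).trans (cfc_congr' hA h)

lemma cfc_mul_eq_one (hA : A.IsHermitian) {f g : ℝ → ℝ}
    (h : ∀ i, f (hA.eigenvalues i) * g (hA.eigenvalues i) = 1) :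
    hA.cfc f * hA.cfc g = 1 :=
  (cfc_mul_eq hA h).trans (cfc_one' hA)

/-- `(A + t)⁻¹ - (B + t)⁻¹` is PSD when `A ≤ B` (PSD matrices, `t > 0`). -/
lemma inv_antitone (hA : A.PosSemidef) (hB : B.PosSemidef) (hd : (B - A).PosSemidef)
    {t : ℝ} (ht : 0 < t) :
    (hA.1.cfc (fun x => (x + t)⁻¹) - hB.1.cfc (fun x => (x + t)⁻¹)).PosSemidef := by
  set N := hA.1.cfc (fun x => (Real.sqrt (x + t))⁻¹) with hNdef
  set N' := hA.1.cfc (fun x => Real.sqrt (x + t)) with hN'def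
  set RA := hA.1.cfc (fun x => (x + t)⁻¹) with hRAdef
  set RB := hB.1.cfc (fun x => (x + t)⁻¹) with hRBdef
  have hApos : ∀ i, 0 < hA.1.eigenvalues i + t := fun i =>
    add_pos_of_nonneg_of_pos (hA.eigenvalues_nonneg i) ht
  have hBpos : ∀ i, 0 < hB.1.eigenvalues i + t := fun i =>
    add_pos_of_nonneg_of_pos (hB.eigenvalues_nonneg i) ht
  have hNN' : N * N' = 1 :=
    cfc_mul_eq_one hA.1 fun i => inv_mul_cancel₀ (Real.sqrt_ne_zero'.mpr (hApos i))
  have hN'N : N' * N = 1 :=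
    cfc_mul_eq_one hA.1 fun i => mul_inv_cancel₀ (Real.sqrt_ne_zero'.mpr (hApos i))
  have hNN : N * N = RA :=
    cfc_mul_eq hA.1 fun i => by
      rw [← mul_inv, Real.mul_self_sqrt (hApos i).le]
  -- P and Q
  set P := hA.1.cfc (fun x => x + t) with hPdef
  set Q := hB.1.cfc (fun x => x + t) with hQdef
  have hPA : P = A + t • 1 := by
    have h := cfc_add' hA.1 (fun x => x) (fun _ => t)
    rw [cfc_id', cfc_const'] at h
    exact h.symm
  have hQB : Q = B + t • 1 := by
    have h := cfc_add' hB.1 (fun x => x) (fun _ => t)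
    rw [cfc_id', cfc_const'] at h
    exact h.symm
  have hQP : Q = (B - A) + P := by rw [hPA, hQB]; abel
  -- N * P * N = 1
  have hNPN : N * P * N = 1 := by
    rw [hNdef, hPdef, cfc_mul', cfc_mul']
    refine ((cfc_congr' hA.1 fun i => ?_).trans (cfc_one' hA.1))
    have h1 := Real.sqrt_ne_zero'.mpr (hApos i)
    have h2 := Real.sq_sqrt (hApos i).le
    field_simp
    try nlinarith [h2]
  -- M := N * (B - A) * N is PSD
  set M := N * (B - A) * N with hMdef
  have hMpsd : M.PosSemidef := by
    have := hd.mul_mul_conjTranspose_same N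
    rwa [(cfc_herm' hA.1 _ : Nᴴ = N)] at this
  have hMh : M.IsHermitian := hMpsd.1
  -- N * Q * N = 1 + M
  have hNQN : N * Q * N = 1 + M := by
    rw [hQP, hMdef, mul_add, add_mul, hNPN, add_comm]
  -- K := inverse of 1 + M
  set K := hMh.cfc (fun x => (1 + x)⁻¹) with hKdef
  have h1M : hMh.cfc (fun x => 1 + x) = 1 + M := by
    have h := cfc_add' hMh (fun _ => 1) (fun x => x)
    rw [cfc_one' hMh, cfc_id' hMh] at h
    exact h.symm
  have hMev : ∀ i, (0:ℝ) < 1 + hMh.eigenvalues i := fun i =>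
    add_pos_of_pos_of_nonneg one_pos (hMpsd.eigenvalues_nonneg i)
  have hK1 : K * (1 + M) = 1 := by
    rw [hKdef, ← h1M]
    exact cfc_mul_eq_one hMh fun i => inv_mul_cancel₀ (hMev i).ne'
  have hQRB : Q * RB = 1 :=
    cfc_mul_eq_one hB.1 fun i => mul_inv_cancel₀ (hBpos i).ne'
  -- Q = N' * (1 + M) * N'
  have hQ' : N' * (1 + M) * N' = Q := by
    rw [← hNQN]
    calc N' * (N * Q * N) * N' = N' * N * (Q * (N * N')) := by simp only [mul_assoc]
    _ = Q := by rw [hN'N, hNN', one_mul, mul_one]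
  -- (N * K * N) * Q = 1
  have hkey : N * K * N * Q = 1 := by
    rw [← hQ']
    calc N * K * N * (N' * (1 + M) * N') = N * (K * (1 + M)) * N' := by
          rw [show N * K * N * (N' * (1 + M) * N') = N * K * ((N * N') * ((1 + M) * N')) by
            simp only [mul_assoc], hNN', one_mul]
          simp only [mul_assoc]
    _ = 1 := by rw [hK1, mul_one, hNN']
  -- RB = N * K * N
  have hRB' : RB = N * K * N := by
    calc RB = 1 * RB := (one_mul _).symm
    _ = N * K * N * Q * RB := by rw [hkey]
    _ = N * K * N * (Q * RB) := by simp only [mul_assoc]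
    _ = N * K * N := by rw [hQRB, mul_one]
  -- wrap up : RA - RB = N * (1 - K) * N
  have h1Kpsd : ((1 : Matrix n n ℂ) - K).PosSemidef := by
    have h := cfc_sub' hMh (fun _ => 1) (fun x => (1 + x)⁻¹)
    rw [cfc_one' hMh] at h
    rw [hKdef, h]
    refine cfc_psd' hMh _ fun i => ?_
    have h2 : (1 + hMh.eigenvalues i)⁻¹ ≤ 1 := by
      rw [inv_le_one_iff₀]
      right
      linarith [hMpsd.eigenvalues_nonneg i]
    simpa using h2
  have hfinal : RA - RB = N * (1 - K) * N := by
    rw [hRB', ← hNN]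
    noncomm_ring
  rw [hfinal]
  have := h1Kpsd.mul_mul_conjTranspose_same N
  rwa [(cfc_herm' hA.1 _ : Nᴴ = N)] at this

lemma smul_psd {t : ℝ} (ht : 0 ≤ t) {M : Matrix n n ℂ} (hM : M.PosSemidef) :
    (t • M).PosSemidef := by
  refine PosSemidef.of_dotProduct_mulVec_nonneg ?_ ?_
  · show (t • M)ᴴ = t • M
    rw [conjTranspose_smul, hM.1, star_trivial]
  · intro x
    rw [smul_mulVec, dotProduct_smul]
    exact smul_nonneg ht (hM.dotProduct_mulVec_nonneg x)

/-- Monotonicity of `x ↦ x/(x+t)` on PSD matrices. -/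
lemma resmono (hA : A.PosSemidef) (hB : B.PosSemidef) (hd : (B - A).PosSemidef)
    {t : ℝ} (ht : 0 < t) :
    (hB.1.cfc (fun x => x / (x + t)) - hA.1.cfc (fun x => x / (x + t))).PosSemidef := by
  have e : ∀ (C : Matrix n n ℂ) (hC : C.PosSemidef),
      hC.1.cfc (fun x => x / (x + t)) = 1 - t • hC.1.cfc (fun x => (x + t)⁻¹) := by
    intro C hC
    have h1 := cfc_smul' hC.1 t (fun x => (x + t)⁻¹)
    have h2 := cfc_sub' hC.1 (fun _ => 1) (fun x => t * (x + t)⁻¹)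
    rw [cfc_one' hC.1] at h2
    calc hC.1.cfc (fun x => x / (x + t)) = hC.1.cfc (fun x => 1 - t * (x + t)⁻¹) := by
          refine cfc_congr' hC.1 fun i => ?_
          have hp : 0 < hC.1.eigenvalues i + t :=
            add_pos_of_nonneg_of_pos (hC.eigenvalues_nonneg i) ht
          field_simp
          ring
    _ = 1 - t • hC.1.cfc (fun x => (x + t)⁻¹) := by rw [h1, h2]
  rw [e B hB, e A hA]
  have heq : (1 - t • hB.1.cfc (fun x => (x + t)⁻¹)) - (1 - t • hA.1.cfc (fun x => (x + t)⁻¹))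
      = t • (hA.1.cfc (fun x => (x + t)⁻¹) - hB.1.cfc (fun x => (x + t)⁻¹)) := by
    rw [smul_sub]; abel
  rw [heq]
  exact smul_psd ht.le (inv_antitone hA hB hd ht)

/-- The normalization constant `∫_0^∞ t^{s-1}/(1+t) dt`. -/
def cst (s : ℝ) : ℝ := ∫ t in Ioi (0:ℝ), t ^ (s-1) * (1 / (1 + t))

variable {s : ℝ}

lemma contOn_g {x : ℝ} (hx : 0 ≤ x) :
    ContinuousOn (fun t : ℝ => t ^ (s-1) * (x / (x + t))) (Ioi 0) := by
  refine ContinuousOn.mul ?_ ?_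
  · exact fun t ht => (Real.continuousAt_rpow_const t _ (Or.inl (ne_of_gt ht))).continuousWithinAt
  · refine ContinuousOn.div continuousOn_const (by fun_prop) fun t ht => ?_
    exact (add_pos_of_nonneg_of_pos hx ht).ne'

lemma integrableOn_g (hs : s ∈ Set.Ioo (0:ℝ) 1) {x : ℝ} (hx : 0 ≤ x) :
    IntegrableOn (fun t : ℝ => t ^ (s-1) * (x / (x + t))) (Ioi 0) := by
  rw [← Ioc_union_Ioi_eq_Ioi (zero_le_one : (0:ℝ) ≤ 1)]
  have hfrac : ∀ t : ℝ, 0 < t → 0 ≤ x / (x + t) ∧ x / (x + t) ≤ 1 := by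
    intro t ht
    have hxt : 0 < x + t := add_pos_of_nonneg_of_pos hx ht
    constructor
    · positivity
    · rw [div_le_one hxt]; linarith
  refine IntegrableOn.union ?_ ?_
  · have hint : IntegrableOn (fun t : ℝ => t ^ (s-1)) (Ioc 0 1) := by
      have := (intervalIntegral.integrableOn_Ioo_rpow_iff (zero_lt_two (α := ℝ))).mpr
        (by linarith [hs.1] : (-1:ℝ) < s - 1)
      exact this.mono_set (fun t ht => ⟨ht.1, lt_of_le_of_lt ht.2 one_lt_two⟩)
    refine Integrable.mono' hint
      (((contOn_g hx).mono Ioc_subset_Ioi_self).aestronglyMeasurable measurableSet_Ioc) ?_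
    filter_upwards [ae_restrict_mem measurableSet_Ioc] with t ht
    have h1 := hfrac t ht.1
    have h2 : (0:ℝ) ≤ t ^ (s-1) := Real.rpow_nonneg ht.1.le _
    rw [norm_mul, Real.norm_eq_abs, Real.norm_eq_abs, abs_of_nonneg h2, abs_of_nonneg h1.1]
    nlinarith [h1.1, h1.2]
  · have hint : IntegrableOn (fun t : ℝ => x * t ^ (s-2)) (Ioi 1) := by
      exact ((integrableOn_Ioi_rpow_iff zero_lt_one).mpr
        (by linarith [hs.2] : s - 2 < -1)).const_mul _
    refine Integrable.mono' hint
      (((contOn_g hx).mono (Ioi_subset_Ioi zero_le_one)).aestronglyMeasurable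
        measurableSet_Ioi) ?_
    filter_upwards [ae_restrict_mem measurableSet_Ioi] with t ht
    have ht0 : (0:ℝ) < t := lt_trans zero_lt_one ht
    have h1 := hfrac t ht0
    have h2 : (0:ℝ) ≤ t ^ (s-1) := Real.rpow_nonneg ht0.le _
    rw [norm_mul, Real.norm_eq_abs, Real.norm_eq_abs, abs_of_nonneg h2, abs_of_nonneg h1.1]
    have hxt : 0 < x + t := add_pos_of_nonneg_of_pos hx ht0
    have hdiv : x / (x + t) ≤ x / t :=
      div_le_div_of_nonneg_left hx ht0 (by linarith)
    calc t ^ (s-1) * (x / (x + t)) ≤ t ^ (s-1) * (x / t) := by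
          exact mul_le_mul_of_nonneg_left hdiv h2
    _ = x * t ^ (s-2) := by
        rw [div_eq_mul_inv, ← Real.rpow_neg_one t, mul_comm x, ← mul_assoc,
          ← Real.rpow_add ht0, show s - 1 + -1 = s - 2 by ring, mul_comm]


lemma cst_pos (hs : s ∈ Set.Ioo (0:ℝ) 1) : 0 < cst s := by
  rw [cst]
  have hi : IntegrableOn (fun t : ℝ => t ^ (s-1) * ((1:ℝ) / (1 + t))) (Ioi 0) :=
    integrableOn_g hs zero_le_one
  rw [setIntegral_pos_iff_support_of_nonneg_ae ?_ hi]
  · refine lt_of_lt_of_le (?_ : (0:ENNReal) < volume (Ioi (0:ℝ))) (measure_mono ?_)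
    · simp [Real.volume_Ioi]
    · intro t ht
      refine ⟨?_, ht⟩
      show t ^ (s-1) * ((1:ℝ) / (1 + t)) ≠ 0
      have ht' : (0:ℝ) < t := ht
      positivity
  · filter_upwards [ae_restrict_mem measurableSet_Ioi] with t ht
    have ht' : (0:ℝ) < t := ht
    positivity

lemma scalar_rep (hs : s ∈ Set.Ioo (0:ℝ) 1) {x : ℝ} (hx : 0 ≤ x) :
    ∫ t in Ioi (0:ℝ), t ^ (s-1) * (x / (x + t)) = cst s * x ^ s := by
  rcases eq_or_lt_of_le hx with h0 | hxpos
  · rw [← h0]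
    simp [Real.zero_rpow (ne_of_gt hs.1)]
  · have key := integral_comp_mul_left_Ioi (fun t : ℝ => t ^ (s-1) * (x / (x + t))) 0 hxpos
    rw [mul_zero] at key
    have congr1 : EqOn (fun u : ℝ => (x*u) ^ (s-1) * (x / (x + x*u)))
        (fun u : ℝ => x ^ (s-1) * (u ^ (s-1) * (1 / (1+u)))) (Ioi 0) := by
      intro u hu
      have hu' : (0:ℝ) < u := hu
      have h1u : (0:ℝ) < 1 + u := by linarith
      simp only
      rw [Real.mul_rpow hxpos.le hu'.le, show x + x*u = x*(1+u) by ring]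
      field_simp
    rw [setIntegral_congr_fun measurableSet_Ioi congr1] at key
    rw [integral_const_mul] at key
    have : ∫ t in Ioi (0:ℝ), t ^ (s-1) * (x / (x + t))
        = x * (x ^ (s-1) * cst s) := by
      rw [cst]
      rw [smul_eq_mul] at key
      field_simp at key ⊢
      linarith [key]
    rw [this, show x * (x ^ (s-1) * cst s) = (x ^ (s-1) * x ^ (1:ℝ)) * cst s by
      rw [Real.rpow_one]; ring, ← Real.rpow_add hxpos, show s - 1 + 1 = s by ring]
    ring


/-- integral-representation comparison of weighted eigenvalue sums. -/
lemma sum_rpow_mono {s : ℝ} (hs : s ∈ Set.Ioo (0:ℝ) 1)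
    (hA : A.PosSemidef) (hB : B.PosSemidef) (wA wB : n → ℝ)
    (hpt : ∀ t : ℝ, 0 < t →
      ∑ i, (hA.1.eigenvalues i / (hA.1.eigenvalues i + t)) * wA i
        ≤ ∑ i, (hB.1.eigenvalues i / (hB.1.eigenvalues i + t)) * wB i) :
    ∑ i, (hA.1.eigenvalues i) ^ s * wA i ≤ ∑ i, (hB.1.eigenvalues i) ^ s * wB i := by
  have key : ∀ (C : Matrix n n ℂ) (hC : C.PosSemidef) (w : n → ℝ),
      ∫ t in Ioi (0:ℝ),
          ∑ i, w i * (t ^ (s-1) * (hC.1.eigenvalues i / (hC.1.eigenvalues i + t)))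
        = cst s * ∑ i, (hC.1.eigenvalues i) ^ s * w i := by
    intro C hC w
    rw [integral_finset_sum]
    · rw [Finset.mul_sum]
      refine Finset.sum_congr rfl fun i _ => ?_
      rw [integral_const_mul, scalar_rep hs (hC.eigenvalues_nonneg i)]
      ring
    · exact fun i _ => (integrableOn_g hs (hC.eigenvalues_nonneg i)).const_mul _
  have intble : ∀ (C : Matrix n n ℂ) (hC : C.PosSemidef) (w : n → ℝ),
      IntegrableOn (fun t : ℝ =>
        ∑ i, w i * (t ^ (s-1) * (hC.1.eigenvalues i / (hC.1.eigenvalues i + t)))) (Ioi 0) :=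
    fun C hC w => integrable_finset_sum _
      (fun i _ => (integrableOn_g hs (hC.eigenvalues_nonneg i)).const_mul _)
  have hmono := setIntegral_mono_on (intble A hA wA) (intble B hB wB) measurableSet_Ioi ?_
  · rw [key A hA wA, key B hB wB] at hmono
    exact le_of_mul_le_mul_left hmono (cst_pos hs)
  · intro t ht
    have ht' : (0:ℝ) < t := ht
    have hts : (0:ℝ) ≤ t ^ (s-1) := Real.rpow_nonneg ht'.le _
    calc ∑ i, wA i * (t ^ (s-1) * (hA.1.eigenvalues i / (hA.1.eigenvalues i + t)))
        = t ^ (s-1) * ∑ i, (hA.1.eigenvalues i / (hA.1.eigenvalues i + t)) * wA i := by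
          rw [Finset.mul_sum]; exact Finset.sum_congr rfl fun i _ => by ring
    _ ≤ t ^ (s-1) * ∑ i, (hB.1.eigenvalues i / (hB.1.eigenvalues i + t)) * wB i :=
          mul_le_mul_of_nonneg_left (hpt t ht') hts
    _ = ∑ i, wB i * (t ^ (s-1) * (hB.1.eigenvalues i / (hB.1.eigenvalues i + t))) := by
          rw [Finset.mul_sum]; exact Finset.sum_congr rfl fun i _ => by ring

/-- Löwner–Heinz: `x ↦ x^s` is operator monotone on PSD matrices for `s ∈ (0,1)`. -/
lemma LH (hA : A.PosSemidef) (hB : B.PosSemidef) (hd : (B - A).PosSemidef)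
    {s : ℝ} (hs : s ∈ Set.Ioo (0:ℝ) 1) :
    (hB.1.cfc (fun x => x ^ s) - hA.1.cfc (fun x => x ^ s)).PosSemidef := by
  refine PosSemidef.of_dotProduct_mulVec_nonneg ((cfc_herm' hB.1 _).sub (cfc_herm' hA.1 _)) fun v => ?_
  rw [sub_mulVec, dotProduct_sub, cfc_quad hB.1, cfc_quad hA.1, ← Complex.ofReal_sub,
    Complex.zero_le_real, sub_nonneg]
  refine sum_rpow_mono hs hA hB _ _ fun t ht => ?_
  have h := (resmono hA hB hd ht).dotProduct_mulVec_nonneg v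
  rw [sub_mulVec, dotProduct_sub, cfc_quad hB.1, cfc_quad hA.1, ← Complex.ofReal_sub,
    Complex.zero_le_real, sub_nonneg] at h
  exact h

end Aud

end AudAux

open Matrix Set Aud

/-- Audenaert's inequality:
`tr[X^s Y^{1-s}] ≥ tr[X (1 - {X-Y}₊)] + tr[Y {X-Y}₊]` for `s ∈ (0,1)`. -/
theorem audenaert {d : ℕ} (X Y : Matrix (Fin d) (Fin d) ℂ)
    (hX : X.PosSemidef) (hY : Y.PosSemidef) (s : ℝ) (hs : s ∈ Set.Ioo (0 : ℝ) 1) :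
    ((mpow X s * mpow Y (1 - s)).trace).re ≥
      ((X * (1 - posProj (X - Y))).trace).re + ((Y * posProj (X - Y)).trace).re := by
  obtain ⟨hs0, hs1⟩ := hs
  have h1s : (1 - s) ∈ Set.Ioo (0:ℝ) 1 := ⟨by linarith, by linarith⟩
  have hΔ : (X - Y).IsHermitian := hX.1.sub hY.1
  have hmpX : mpow X s = hX.1.cfc (fun x => x ^ s) := by
    rw [mpow, matFun, dif_pos hX.1]
  have hmpY : mpow Y (1-s) = hY.1.cfc (fun x => x ^ (1-s)) := by
    rw [mpow, matFun, dif_pos hY.1]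
  have hpP : posProj (X - Y) = hΔ.cfc (fun x => if 0 < x then 1 else 0) := by
    rw [posProj, matFun, dif_pos hΔ]
  set P := hΔ.cfc (fun x => if 0 < x then 1 else 0) with hPdef
  set Δp := hΔ.cfc (fun x => max x 0) with hΔpdef
  have hΔpPSD : Δp.PosSemidef := cfc_psd' hΔ _ fun i => le_max_right _ _
  have hDP : (X - Y) * P = Δp := by
    have h := cfc_mul_eq hΔ (f := fun x => x) (g := fun x => if 0 < x then 1 else 0)
      (fg := fun x => max x 0) (fun i => by
        by_cases h : 0 < hΔ.eigenvalues i
        · simp [h, max_eq_left h.le]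
        · simp [h, max_eq_right (not_lt.mp h)])
    rwa [cfc_id' hΔ] at h
  set M := Y + Δp with hMdef
  have hMpsd : M.PosSemidef := hY.add hΔpPSD
  have hMX : (M - X).PosSemidef := by
    have h := cfc_sub' hΔ (fun x => max x 0) (fun x => x)
    rw [cfc_id' hΔ] at h
    have h2 : M - X = Δp - (X - Y) := by rw [hMdef]; abel
    rw [h2, h]
    exact cfc_psd' hΔ _ fun i => sub_nonneg.mpr (le_max_left _ _)
  have hMY : (M - Y).PosSemidef := by
    rw [hMdef, add_sub_cancel_left]; exact hΔpPSD
  -- x^s * x^(1-s) = x on PSD matrices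
  have powmul : ∀ (C : Matrix (Fin d) (Fin d) ℂ) (hC : C.PosSemidef),
      hC.1.cfc (fun x => x ^ s) * hC.1.cfc (fun x => x ^ (1-s)) = C := by
    intro C hC
    refine (cfc_mul_eq hC.1 fun i => ?_).trans (cfc_id' hC.1)
    rcases (hC.eigenvalues_nonneg i).eq_or_lt with h0 | hpos
    · rw [← h0]
      simp [Real.zero_rpow (ne_of_gt hs0)]
    · rw [← Real.rpow_add hpos, show s + (1 - s) = 1 by ring, Real.rpow_one]
  have hXsPSD : (hX.1.cfc (fun x => x ^ s)).PosSemidef :=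
    cfc_psd' hX.1 _ fun i => Real.rpow_nonneg (hX.eigenvalues_nonneg i) _
  have hYs'PSD : (hY.1.cfc (fun x => x ^ (1-s))).PosSemidef :=
    cfc_psd' hY.1 _ fun i => Real.rpow_nonneg (hY.eigenvalues_nonneg i) _
  -- Löwner–Heinz comparisons
  have LH1 := LH hX hMpsd hMX (⟨hs0, hs1⟩ : s ∈ Set.Ioo (0:ℝ) 1)
  have LH3 := LH hX hMpsd hMX h1s
  have LH2 := LH hY hMpsd hMY h1s
  have LH4 := LH hY hMpsd hMY (⟨hs0, hs1⟩ : s ∈ Set.Ioo (0:ℝ) 1)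
  set Xs := hX.1.cfc (fun x => x ^ s) with hXs
  set Xs' := hX.1.cfc (fun x => x ^ (1-s)) with hXs'
  set Ys := hY.1.cfc (fun x => x ^ s) with hYs
  set Ys' := hY.1.cfc (fun x => x ^ (1-s)) with hYs'
  set Ms := hMpsd.1.cfc (fun x => x ^ s) with hMs
  set Ms' := hMpsd.1.cfc (fun x => x ^ (1-s)) with hMs'
  have t1 := trace_mul_nonneg LH1 LH2
  have t2 := trace_mul_nonneg hXsPSD LH3
  have t3 := trace_mul_nonneg LH4 hYs'PSD
  -- trace identities
  have e1 : ((Ms - Xs) * (Ms' - Ys')).trace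
      = (M.trace - (Ms * Ys').trace - (Xs * Ms').trace) + (Xs * Ys').trace := by
    have expand : (Ms - Xs) * (Ms' - Ys')
        = ((Ms * Ms' - Ms * Ys') - Xs * Ms') + Xs * Ys' := by noncomm_ring
    rw [expand, trace_add, trace_sub, trace_sub, powmul M hMpsd]
  have e2 : (Xs * (Ms' - Xs')).trace = (Xs * Ms').trace - X.trace := by
    rw [mul_sub, trace_sub, powmul X hX]
  have e3 : ((Ms - Ys) * Ys').trace = (Ms * Ys').trace - Y.trace := by
    rw [sub_mul, trace_sub, powmul Y hY]
  have eM : M.trace = Y.trace + Δp.trace := by rw [hMdef, trace_add]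
  have eR : (X * (1 - P)).trace + (Y * P).trace = X.trace - Δp.trace := by
    rw [mul_sub, mul_one, trace_sub, ← hDP, sub_mul, trace_sub]
    ring
  -- pass to real parts
  rw [e1] at t1
  rw [e2] at t2
  rw [e3] at t3
  have r1 := (Complex.le_def.mp t1).1
  have r2 := (Complex.le_def.mp t2).1
  have r3 := (Complex.le_def.mp t3).1
  simp only [Complex.add_re, Complex.sub_re, Complex.zero_re] at r1 r2 r3
  have reM := congrArg Complex.re eM
  simp only [Complex.add_re] at reM
  rw [hmpX, hmpY, ge_iff_le, ← Complex.add_re, hpP, eR, Complex.sub_re]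
  linarith [r1, r2, r3, reM]
end
end

section
/- For every permutation-invariant density matrix σ_{A^n} on H_A^{⊗n}, one has σ_{A^n} ≤ C(n,|A|) · ω_{A^n} in the Loewner order, where C(n,|A|) = binom(n+|A|²-1, n) and ω_{A^n} := C(n,|A|)^{-1} · tr_{Ã^n}[P^Sym_{A^nÃ^n}] is the normalized partial trace of the projector onto the symmetric subspace of (H_A⊗H_Ã)^{⊗n} with |Ã| = |A|. -/
noncomputable section
open scoped BigOperators ComplexOrder

variable {n : Type*} [Fintype n] [DecidableEq n]

/-- A matrix on `H^{⊗k}` is permutation invariant if conjugation by every permutation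
of the tensor factors leaves it fixed, i.e. entrywise invariance under permutations. -/
def PermInvariant {γ : Type*} {k : ℕ} (σ : Matrix (Fin k → γ) (Fin k → γ) ℂ) : Prop :=
  ∀ π : Equiv.Perm (Fin k), ∀ x y, σ (x ∘ π) (y ∘ π) = σ x y

/-- The permutation unitary on `H^{⊗k}` associated to `π`. -/
noncomputable def permMatrix (γ : Type*) [DecidableEq γ] {k : ℕ} (π : Equiv.Perm (Fin k)) :
    Matrix (Fin k → γ) (Fin k → γ) ℂ :=
  Matrix.of fun x y => if x = y ∘ π then 1 else 0

/-- The orthogonal projector onto the symmetric subspace of `(H_A ⊗ H_Ã)^{⊗k}`,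
as the average of all permutation unitaries. -/
noncomputable def symProj (a k : ℕ) :
    Matrix (Fin k → Fin a × Fin a) (Fin k → Fin a × Fin a) ℂ :=
  ((k.factorial : ℂ))⁻¹ • ∑ π : Equiv.Perm (Fin k), permMatrix (Fin a × Fin a) π

/-- Partial trace over the second (`Ã`) factor of each of the `k` tensor slots. -/
noncomputable def ptrTilde {a k : ℕ}
    (M : Matrix (Fin k → Fin a × Fin a) (Fin k → Fin a × Fin a) ℂ) :
    Matrix (Fin k → Fin a) (Fin k → Fin a) ℂ :=
  Matrix.of fun x y => ∑ z : Fin k → Fin a, M (fun i => (x i, z i)) (fun i => (y i, z i))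

/-- The universal permutation-invariant state
`ω = binom(k+a²-1, k)⁻¹ · tr_Ã[P^Sym]`. -/
noncomputable def omegaSym (a k : ℕ) : Matrix (Fin k → Fin a) (Fin k → Fin a) ℂ :=
  ((Nat.choose (k + a ^ 2 - 1) k : ℂ))⁻¹ • ptrTilde (symProj a k)

/-! ### Auxiliary material -/

section SqrtCompat
open scoped MatrixOrder
namespace Matrix.PosSemidef
variable {A : Matrix n n ℂ}
def sqrt (_h : A.PosSemidef) : Matrix n n ℂ := CFC.sqrt A
lemma posSemidef_sqrt (h : A.PosSemidef) : h.sqrt.PosSemidef :=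
  Matrix.nonneg_iff_posSemidef.mp (CFC.sqrt_nonneg A)
lemma sqrt_mul_self (h : A.PosSemidef) : h.sqrt * h.sqrt = A :=
  CFC.sqrt_mul_sqrt_self A h.nonneg
lemma sq_sqrt (h : A.PosSemidef) : h.sqrt ^ 2 = A := CFC.sq_sqrt A h.nonneg
lemma eq_sqrt_of_sq_eq {B : Matrix n n ℂ} (hB : B.PosSemidef) (h : A.PosSemidef)
    (hBA : B ^ 2 = A) : B = h.sqrt :=
  ((CFC.sqrt_eq_iff A B h.nonneg hB.nonneg).mpr (by rw [← sq]; exact hBA)).symm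
end Matrix.PosSemidef
end SqrtCompat

namespace PermOmegaAux

open Matrix

variable {a k : ℕ}

/-- Pairing equivalence. -/
def pairEquiv (a k : ℕ) : (Fin k → Fin a) × (Fin k → Fin a) ≃ (Fin k → Fin a × Fin a) where
  toFun xz := fun i => (xz.1 i, xz.2 i)
  invFun p := (fun i => (p i).1, fun i => (p i).2)
  left_inv := by intro xz; rfl
  right_inv := by intro p; funext i; rfl

/-- A slice vector used to show the partial trace preserves positivity. -/
def slice (v : (Fin k → Fin a) → ℂ) (z : Fin k → Fin a) : (Fin k → Fin a × Fin a) → ℂ :=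
  fun p => if (fun i => (p i).2) = z then v (fun i => (p i).1) else 0

lemma slice_pair (v : (Fin k → Fin a) → ℂ) (z x z' : Fin k → Fin a) :
    slice v z (pairEquiv a k (x, z')) = if z' = z then v x else 0 := by
  simp [slice, pairEquiv]
  rfl

lemma comp_perm_eq_iff {γ : Type*} (π : Equiv.Perm (Fin k)) (x y : Fin k → γ) :
    x = y ∘ π ↔ y = x ∘ ⇑π⁻¹ := by
  constructor
  · rintro rfl; funext i; simp
  · rintro rfl; funext i; simp

lemma ptrTilde_posSemidef {M : Matrix (Fin k → Fin a × Fin a) (Fin k → Fin a × Fin a) ℂ}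
    (hM : M.PosSemidef) : (ptrTilde M).PosSemidef := by
  refine Matrix.PosSemidef.of_dotProduct_mulVec_nonneg ?_ ?_
  · ext x y
    simp only [Matrix.conjTranspose_apply, ptrTilde, Matrix.of_apply, star_sum]
    refine Finset.sum_congr rfl fun z _ => ?_
    have h := congrFun (congrFun hM.1 (fun i => (x i, z i))) (fun i => (y i, z i))
    rw [Matrix.conjTranspose_apply] at h
    exact h
  · intro v
    have hmv : ∀ z p, (M *ᵥ slice v z) p
        = ∑ y, M p (fun i => (y i, z i)) * v y := by
      intro z p
      show ∑ q, M p q * slice v z q = _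
      rw [← Equiv.sum_comp (pairEquiv a k) (fun q => M p q * slice v z q),
        Fintype.sum_prod_type]
      refine Finset.sum_congr rfl fun y _ => ?_
      simp only [slice_pair, mul_ite, mul_zero]
      simp [pairEquiv]
    have key : dotProduct (star v) (ptrTilde M *ᵥ v) =
        ∑ z : Fin k → Fin a, dotProduct (star (slice v z)) (M *ᵥ (slice v z)) := by
      have hR : ∀ z, dotProduct (star (slice v z)) (M *ᵥ (slice v z))
          = ∑ x, star (v x) * ∑ y, M (fun i => (x i, z i)) (fun i => (y i, z i)) * v y := by
        intro z
        show ∑ p, star (slice v z p) * (M *ᵥ slice v z) p = _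
        rw [← Equiv.sum_comp (pairEquiv a k)
          (fun p => star (slice v z p) * (M *ᵥ slice v z) p), Fintype.sum_prod_type]
        refine Finset.sum_congr rfl fun x _ => ?_
        simp only [slice_pair, hmv]
        rw [Finset.sum_eq_single z]
        · simp [pairEquiv]
        · intro b _ hb; simp [hb]
        · intro h; exact absurd (Finset.mem_univ z) h
      simp_rw [hR]
      show ∑ x, star (v x) * (ptrTilde M *ᵥ v) x = _
      rw [Finset.sum_comm]
      refine Finset.sum_congr rfl fun x _ => ?_
      show star (v x) * ∑ y, ptrTilde M x y * v y = _
      simp only [ptrTilde, Matrix.of_apply, Finset.sum_mul, Finset.mul_sum]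
      rw [Finset.sum_comm]
    rw [key]
    exact Finset.sum_nonneg fun z _ => hM.dotProduct_mulVec_nonneg _

lemma ptrTilde_sub (M N : Matrix (Fin k → Fin a × Fin a) (Fin k → Fin a × Fin a) ℂ) :
    ptrTilde (M - N) = ptrTilde M - ptrTilde N := by
  ext x y
  simp [ptrTilde, Finset.sum_sub_distrib]

lemma permMatrix_mul (π τ : Equiv.Perm (Fin k)) :
    permMatrix (Fin a × Fin a) π * permMatrix (Fin a × Fin a) τ
      = permMatrix (Fin a × Fin a) (τ * π) := by
  ext x y
  rw [Matrix.mul_apply]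
  rw [Finset.sum_eq_single (y ∘ ⇑τ)]
  · show (if x = (y ∘ ⇑τ) ∘ ⇑π then (1:ℂ) else 0) * (if (y ∘ ⇑τ) = y ∘ ⇑τ then (1:ℂ) else 0)
      = (if x = y ∘ ⇑(τ * π) then (1:ℂ) else 0)
    rw [if_pos rfl, mul_one, show (y ∘ ⇑τ) ∘ ⇑π = y ∘ ⇑(τ * π) from rfl]
  · intro w _ hw
    show (if x = w ∘ ⇑π then (1:ℂ) else 0) * (if w = y ∘ ⇑τ then (1:ℂ) else 0) = 0
    rw [if_neg hw, mul_zero]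
  · intro h; exact absurd (Finset.mem_univ _) h

lemma permMatrix_conjTranspose (π : Equiv.Perm (Fin k)) :
    (permMatrix (Fin a × Fin a) π)ᴴ = permMatrix (Fin a × Fin a) π⁻¹ := by
  ext x y
  rw [Matrix.conjTranspose_apply]
  show star (if y = x ∘ ⇑π then (1:ℂ) else 0) = (if x = y ∘ ⇑π⁻¹ then (1:ℂ) else 0)
  by_cases h : x = y ∘ ⇑π⁻¹
  · rw [if_pos h, if_pos ((comp_perm_eq_iff π y x).mpr h), star_one]
  · rw [if_neg h, if_neg (fun hh => h ((comp_perm_eq_iff π y x).mp hh)), star_zero]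

lemma factorial_ne_zero' : ((k.factorial : ℂ)) ≠ 0 := by
  exact_mod_cast k.factorial_ne_zero

lemma symProj_isHermitian : (symProj a k).IsHermitian := by
  unfold symProj
  rw [Matrix.IsHermitian, Matrix.conjTranspose_smul, Matrix.conjTranspose_sum]
  simp_rw [permMatrix_conjTranspose]
  rw [← Equiv.sum_comp (Equiv.inv (Equiv.Perm (Fin k)))
    (fun π => permMatrix (Fin a × Fin a) π)]
  congr 1
  simp

lemma symProj_mul_self : symProj a k * symProj a k = symProj a k := by
  unfold symProj
  rw [Matrix.smul_mul, Matrix.mul_smul, smul_smul, Finset.sum_mul]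
  have : ∀ π : Equiv.Perm (Fin k),
      permMatrix (Fin a × Fin a) π * ∑ τ : Equiv.Perm (Fin k), permMatrix (Fin a × Fin a) τ
        = ∑ τ : Equiv.Perm (Fin k), permMatrix (Fin a × Fin a) τ := by
    intro π
    rw [Finset.mul_sum]
    simp_rw [permMatrix_mul]
    exact Equiv.sum_comp (Equiv.mulRight π) (fun τ => permMatrix (Fin a × Fin a) τ)
  simp_rw [this]
  rw [Finset.sum_const, Finset.card_univ, Fintype.card_perm, Fintype.card_fin]
  rw [← Nat.cast_smul_eq_nsmul ℂ, smul_smul]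
  congr 1
  rw [mul_assoc, inv_mul_cancel₀ factorial_ne_zero', mul_one]

lemma symProj_mulVec {ψ : (Fin k → Fin a × Fin a) → ℂ}
    (hψ : ∀ π : Equiv.Perm (Fin k), ∀ p, ψ (p ∘ π) = ψ p) :
    symProj a k *ᵥ ψ = ψ := by
  have hone : ∀ π : Equiv.Perm (Fin k), permMatrix (Fin a × Fin a) π *ᵥ ψ = ψ := by
    intro π
    funext q
    show ∑ r, permMatrix (Fin a × Fin a) π q r * ψ r = ψ q
    rw [Finset.sum_eq_single (q ∘ ⇑π⁻¹)]
    · show (if q = (q ∘ ⇑π⁻¹) ∘ ⇑π then (1:ℂ) else 0) * ψ (q ∘ ⇑π⁻¹) = ψ q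
      have hc : (q ∘ ⇑π⁻¹) ∘ ⇑π = q := by funext i; simp
      rw [hc, if_pos rfl, one_mul]
      exact hψ π⁻¹ q
    · intro w _ hw
      show (if q = w ∘ ⇑π then (1:ℂ) else 0) * ψ w = 0
      rw [if_neg (fun hq => hw ((comp_perm_eq_iff π q w).mp hq)), zero_mul]
    · intro h; exact absurd (Finset.mem_univ _) h
  funext p
  show ∑ r, symProj a k p r * ψ r = ψ p
  have h1 : ∀ r, symProj a k p r * ψ r
      = ∑ π : Equiv.Perm (Fin k),
          (k.factorial : ℂ)⁻¹ * (permMatrix (Fin a × Fin a) π p r * ψ r) := by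
    intro r
    unfold symProj
    rw [Matrix.smul_apply, Matrix.sum_apply, smul_eq_mul, mul_assoc, Finset.sum_mul,
      Finset.mul_sum]
  rw [Finset.sum_congr rfl (fun r _ => h1 r), Finset.sum_comm]
  have h2 : ∀ π : Equiv.Perm (Fin k),
      ∑ r, (k.factorial : ℂ)⁻¹ * (permMatrix (Fin a × Fin a) π p r * ψ r)
        = (k.factorial : ℂ)⁻¹ * ψ p := by
    intro π
    rw [← Finset.mul_sum]
    congr 1
    exact congrFun (hone π) p
  rw [Finset.sum_congr rfl (fun π _ => h2 π), Finset.sum_const, Finset.card_univ,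
    Fintype.card_perm, Fintype.card_fin, nsmul_eq_mul, ← mul_assoc,
    mul_inv_cancel₀ factorial_ne_zero', one_mul]


/-- Precomposition by a permutation as an equivalence. -/
def precompEquiv {γ : Type*} (π : Equiv.Perm (Fin k)) : (Fin k → γ) ≃ (Fin k → γ) where
  toFun x := x ∘ π
  invFun x := x ∘ π.symm
  left_inv := by intro x; funext i; simp
  right_inv := by intro x; funext i; simp

lemma permInvariant_sqrt {σ : Matrix (Fin k → Fin a) (Fin k → Fin a) ℂ} (h : σ.PosSemidef)
    (hp : PermInvariant σ) : PermInvariant h.sqrt := by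
  intro π x y
  have hsub : h.sqrt.submatrix (⇑(precompEquiv (γ := Fin a) π)) (⇑(precompEquiv (γ := Fin a) π))
      = h.sqrt := by
    refine Matrix.PosSemidef.eq_sqrt_of_sq_eq (h.posSemidef_sqrt.submatrix _) h ?_
    rw [pow_two, Matrix.submatrix_mul_equiv, ← pow_two, h.sq_sqrt]
    ext u w
    exact hp π u w
  exact congrFun (congrFun hsub x) y

end PermOmegaAux

open Matrix PermOmegaAux

/-- Every permutation-invariant density matrix satisfies
`σ ≤ binom(k+a²-1, k) · ω` in the Loewner order. -/
theorem permInvariant_le_omegaSym {a k : ℕ}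
    (σ : Matrix (Fin k → Fin a) (Fin k → Fin a) ℂ)
    (hσ : IsDensity σ) (hperm : PermInvariant σ) :
    (((Nat.choose (k + a ^ 2 - 1) k : ℂ)) • omegaSym a k - σ).PosSemidef := by
  classical
  obtain ⟨hpsd, htr⟩ := hσ
  have hC : (Nat.choose (k + a ^ 2 - 1) k : ℂ) ≠ 0 := by
    intro h
    have h0 : Nat.choose (k + a ^ 2 - 1) k = 0 := by exact_mod_cast h
    rw [Nat.choose_eq_zero_iff] at h0
    have ha : a = 0 := by
      by_contra ha
      have : 1 ≤ a ^ 2 := Nat.one_le_iff_ne_zero.mpr (pow_ne_zero 2 ha)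
      omega
    subst ha
    simp only [pow_two, Nat.mul_zero, Nat.add_zero] at h0
    have hk : 1 ≤ k := by omega
    haveI : IsEmpty (Fin k → Fin 0) := ⟨fun f => (f ⟨0, hk⟩).elim0⟩
    rw [Matrix.trace] at htr
    simp at htr
  have hω : (Nat.choose (k + a ^ 2 - 1) k : ℂ) • omegaSym a k = ptrTilde (symProj a k) := by
    rw [omegaSym, smul_smul, mul_inv_cancel₀ hC, one_smul]
  rw [hω]
  set s := hpsd.sqrt with hs
  have hsperm : PermInvariant s := permInvariant_sqrt hpsd hperm
  set ψ : (Fin k → Fin a × Fin a) → ℂ :=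
    fun p => s (fun i => (p i).1) (fun i => (p i).2) with hψdef
  have hψsym : ∀ π : Equiv.Perm (Fin k), ∀ p, ψ (p ∘ π) = ψ p := fun π p =>
    hsperm π (fun i => (p i).1) (fun i => (p i).2)
  set Q := Matrix.vecMulVec ψ (star ψ) with hQ
  have hPψ : symProj a k *ᵥ ψ = ψ := symProj_mulVec hψsym
  have hptrQ : ptrTilde Q = σ := by
    ext x y
    simp only [ptrTilde, Matrix.of_apply, hQ, Matrix.vecMulVec_apply, Pi.star_apply, hψdef]
    have hterm : ∀ z : Fin k → Fin a,
        (s (fun i => x i) fun i => z i) * star (s (fun i => y i) fun i => z i)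
          = s x z * sᴴ z y := by
      intro z
      rw [Matrix.conjTranspose_apply]
    rw [Finset.sum_congr rfl fun z _ => hterm z, ← Matrix.mul_apply, hs,
      hpsd.posSemidef_sqrt.1, hpsd.sqrt_mul_self]
  have hnorm : ∑ p, star (ψ p) * ψ p = 1 := by
    rw [← Equiv.sum_comp (pairEquiv a k) (fun p => star (ψ p) * ψ p), Fintype.sum_prod_type]
    have hdiag : ∀ x : Fin k → Fin a,
        ∑ z, star (ψ (pairEquiv a k (x, z))) * ψ (pairEquiv a k (x, z)) = σ x x := by
      intro x
      have hterm : ∀ z : Fin k → Fin a,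
          star (ψ (pairEquiv a k (x, z))) * ψ (pairEquiv a k (x, z)) = s x z * sᴴ z x := by
        intro z
        rw [Matrix.conjTranspose_apply]
        exact mul_comm _ _
      rw [Finset.sum_congr rfl fun z _ => hterm z, ← Matrix.mul_apply, hs,
        hpsd.posSemidef_sqrt.1, hpsd.sqrt_mul_self]
    rw [Finset.sum_congr rfl fun x _ => hdiag x]
    simpa [Matrix.trace, Matrix.diag] using htr
  have hQH : Qᴴ = Q := by
    ext p q
    simp only [hQ, Matrix.conjTranspose_apply, Matrix.vecMulVec_apply, Pi.star_apply,
      star_mul', star_star]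
    exact mul_comm _ _
  have hPH : (symProj a k)ᴴ = symProj a k := symProj_isHermitian
  have hPQ : symProj a k * Q = Q := by
    ext p q
    simp only [hQ, Matrix.mul_apply, Matrix.vecMulVec_apply, Pi.star_apply]
    calc ∑ u, symProj a k p u * (ψ u * star (ψ q))
        = (∑ u, symProj a k p u * ψ u) * star (ψ q) := by
          rw [Finset.sum_mul]
          exact Finset.sum_congr rfl fun u _ => (mul_assoc _ _ _).symm
      _ = ψ p * star (ψ q) := by
          rw [show ∑ u, symProj a k p u * ψ u = ψ p from congrFun hPψ p]
  have hQP : Q * symProj a k = Q := by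
    have h2 := congrArg Matrix.conjTranspose hPQ
    rwa [Matrix.conjTranspose_mul, hQH, hPH] at h2
  have hQQ : Q * Q = Q := by
    ext p q
    simp only [hQ, Matrix.mul_apply, Matrix.vecMulVec_apply, Pi.star_apply]
    calc ∑ u, ψ p * star (ψ u) * (ψ u * star (ψ q))
        = (ψ p * star (ψ q)) * ∑ u, star (ψ u) * ψ u := by
          rw [Finset.mul_sum]
          exact Finset.sum_congr rfl fun u _ => by ring
      _ = ψ p * star (ψ q) := by rw [hnorm, mul_one]
  have hRsq : (symProj a k - Q) * (symProj a k - Q) = symProj a k - Q := by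
    rw [Matrix.sub_mul, Matrix.mul_sub, Matrix.mul_sub, symProj_mul_self, hPQ, hQP, hQQ]
    abel
  have hRH : (symProj a k - Q)ᴴ = symProj a k - Q := by
    rw [Matrix.conjTranspose_sub, hQH, hPH]
  have hpos : (symProj a k - Q).PosSemidef := by
    have h3 := Matrix.posSemidef_conjTranspose_mul_self (symProj a k - Q)
    rwa [hRH, hRsq] at h3
  have h4 := ptrTilde_posSemidef hpos
  rwa [ptrTilde_sub, hptrQ] at h4
end
end
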